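/- arXiv:1508.00506 — 7 statements merged into one kernel-verified Lean document; each statement's English description precedes it below -/
import Mathlib

section
/- (Claim 2 in the proof of Theorem 4.) Fix n, k ≥ 1, t₀ ∈ ℝ and x ∈ ℝⁿ. For each ℓ = 1,…,k let ℋ_ℓ be a real inner product space, let c^ℓ : ℝⁿ → ℋ_ℓ be continuous, let Θ^ℓ : ℝ → ℋ_ℓ be differentiable at t₀ with derivative Θ̇^ℓ, and let ψ_ℓ : ℋ_ℓ → ℝ have a gradient ∇ψ_ℓ(Θ^ℓ_{t₀}) at Θ^ℓ_{t₀} (in the sense that ψ_ℓ is Fréchet differentiable there with derivative v ↦ ⟨∇ψ_ℓ(Θ^ℓ_{t₀}), v⟩). Let ν ∈ Δ_k, and define p_ℓ(y,t) := exp(⟨Θ^ℓ_t, c^ℓ(y)⟩ − ψ_ℓ(Θ^ℓ_t)) and p(y,t) := ∑_{ℓ=1}^k ν_ℓ p_ℓ(y,t). For i = 1,…,n let φ_i^ℓ : ℝⁿ → ℋ_ℓ be continuous functions such that (i) for every y ∈ ℝⁿ, ∑_{i=1}^n ⟨Θ̇^ℓ, φ_i^ℓ(y)⟩ = ⟨Θ̇^ℓ,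 c^ℓ(y) − ∇ψ_ℓ(Θ^ℓ_{t₀})⟩, and (ii) for every i, ℓ and every s ∈ ℝ the map ξ ↦ φ_i^ℓ(x^{i←ξ})·exp(⟨Θ^ℓ_{t₀}, c^ℓ(x^{i←ξ})⟩) is Bochner integrable on (−∞, s]. Define I_i^ℓ(y) := ∫_{−∞}^{y_i} φ_i^ℓ(y^{i←ξ})·exp(⟨Θ^ℓ_{t₀}, c^ℓ(y^{i←ξ}) − c^ℓ(y)⟩) dξ and γ_i(y) := −(1/p(y,t₀))·∑_{ℓ=1}^k ν_ℓ p_ℓ(y,t₀)·⟨Θ̇^ℓ, I_i^ℓ(y)⟩. Then the time derivative ∂_t p(x, ·) exists at t₀, each partial derivative ∂_{x_i}( γ_i · p(·,t₀) ) exists at x, and ∂_t p(x, t₀) = −∑_{i=1}^n ∂_{x_i}( γ_i · p(·,t₀) )(x). -/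
open MeasureTheory
open scoped RealInnerProductSpace BigOperators

/-- Claim 2 in the proof of Theorem 4: for a mixture of exponential-family densities
`p(y,t) = ∑_ℓ ν_ℓ exp(⟪Θ^ℓ_t, c^ℓ(y)⟫ − ψ_ℓ(Θ^ℓ_t))` and the correction drift `γ` built from
the integral terms `I_i^ℓ`, the time derivative of `p(x,·)` at `t₀` exists, the partial
derivatives `∂_{x_i}(γ_i p(·,t₀))` exist at `x`, and
`∂_t p(x,t₀) = −∑_i ∂_{x_i}(γ_i p(·,t₀))(x)`. -/
theorem claim2_time_derivative {n k : ℕ} (hn : 1 ≤ n) (hk : 1 ≤ k) (t₀ : ℝ)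
    (x : Fin n → ℝ)
    (H : Fin k → Type*) [∀ ℓ, NormedAddCommGroup (H ℓ)]
    [∀ ℓ, InnerProductSpace ℝ (H ℓ)] [∀ ℓ, CompleteSpace (H ℓ)]
    (c : ∀ ℓ, (Fin n → ℝ) → H ℓ) (hc : ∀ ℓ, Continuous (c ℓ))
    (Θ : ∀ ℓ, ℝ → H ℓ) (Θdot : ∀ ℓ, H ℓ)
    (hΘ : ∀ ℓ, HasDerivAt (Θ ℓ) (Θdot ℓ) t₀)
    (ψ : ∀ ℓ, H ℓ → ℝ) (gψ : ∀ ℓ, H ℓ)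
    (hψ : ∀ ℓ, HasFDerivAt (ψ ℓ) (innerSL ℝ (gψ ℓ)) (Θ ℓ t₀))
    (ν : Fin k → ℝ) (hν0 : ∀ ℓ, 0 ≤ ν ℓ) (hν1 : ∑ ℓ, ν ℓ = 1)
    (pc : Fin k → (Fin n → ℝ) → ℝ → ℝ)
    (hpc : ∀ ℓ y t, pc ℓ y t = Real.exp (⟪Θ ℓ t, c ℓ y⟫ - ψ ℓ (Θ ℓ t)))
    (P : (Fin n → ℝ) → ℝ → ℝ)
    (hP : ∀ y t, P y t = ∑ ℓ, ν ℓ * pc ℓ y t)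
    (φ : ∀ ℓ, Fin n → (Fin n → ℝ) → H ℓ)
    (hφcont : ∀ ℓ i, Continuous (φ ℓ i))
    (hφsum : ∀ ℓ, ∀ y : Fin n → ℝ,
      ∑ i, ⟪Θdot ℓ, φ ℓ i y⟫ = ⟪Θdot ℓ, c ℓ y - gψ ℓ⟫)
    (hφint : ∀ ℓ, ∀ i : Fin n, ∀ s : ℝ,
      IntegrableOn
        (fun ξ : ℝ =>
          Real.exp (⟪Θ ℓ t₀, c ℓ (Function.update x i ξ)⟫) • φ ℓ i (Function.update x i ξ))
        (Set.Iic s))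
    (I : ∀ ℓ, Fin n → (Fin n → ℝ) → H ℓ)
    (hI : ∀ ℓ i (y : Fin n → ℝ), I ℓ i y =
      ∫ ξ in Set.Iic (y i),
        Real.exp (⟪Θ ℓ t₀, c ℓ (Function.update y i ξ) - c ℓ y⟫) •
          φ ℓ i (Function.update y i ξ))
    (γ : Fin n → (Fin n → ℝ) → ℝ)
    (hγ : ∀ i y, γ i y = -(1 / P y t₀) * ∑ ℓ, ν ℓ * pc ℓ y t₀ * ⟪Θdot ℓ, I ℓ i y⟫) :
    DifferentiableAt ℝ (fun t => P x t) t₀ ∧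
    (∀ i : Fin n, DifferentiableAt ℝ
        (fun ξ : ℝ => γ i (Function.update x i ξ) * P (Function.update x i ξ) t₀) (x i)) ∧
    deriv (fun t => P x t) t₀
      = -∑ i : Fin n, deriv
          (fun ξ : ℝ => γ i (Function.update x i ξ) * P (Function.update x i ξ) t₀)
          (x i) := by
  classical
  set g : ∀ ℓ : Fin k, Fin n → ℝ → H ℓ := fun ℓ i ξ =>
    Real.exp (⟪Θ ℓ t₀, c ℓ (Function.update x i ξ)⟫) • φ ℓ i (Function.update x i ξ) with hgdef
  have hupd : ∀ i : Fin n, Continuous (fun ξ : ℝ => Function.update x i ξ) :=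
    fun i => continuous_const.update i continuous_id
  have hgcont : ∀ ℓ i, Continuous (g ℓ i) := by
    intro ℓ i
    exact (Real.continuous_exp.comp
        (Continuous.inner continuous_const ((hc ℓ).comp (hupd i)))).smul
      ((hφcont ℓ i).comp (hupd i))
  -- FTC : derivative of s ↦ ∫_{Iic s} g
  have hF : ∀ ℓ i (b : ℝ),
      HasDerivAt (fun s => ∫ ξ in Set.Iic s, g ℓ i ξ) (g ℓ i b) b := by
    intro ℓ i b
    have h1 : HasDerivAt (fun s => (∫ ξ in Set.Iic b, g ℓ i ξ) + ∫ ξ in b..s, g ℓ i ξ)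
        (g ℓ i b) b :=
      (intervalIntegral.integral_hasDerivAt_right ((hgcont ℓ i).intervalIntegrable _ _)
        ((hgcont ℓ i).stronglyMeasurableAtFilter _ _) (hgcont ℓ i).continuousAt).const_add _
    refine h1.congr_of_eventuallyEq (Filter.Eventually.of_forall fun s => ?_)
    show (∫ ξ in Set.Iic s, g ℓ i ξ) = (∫ ξ in Set.Iic b, g ℓ i ξ) + ∫ ξ in b..s, g ℓ i ξ
    rw [← sub_eq_iff_eq_add']
    exact intervalIntegral.integral_Iic_sub_Iic (hφint ℓ i b) (hφint ℓ i s)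
  have hpcpos : ∀ ℓ y, 0 < pc ℓ y t₀ := fun ℓ y => by rw [hpc]; exact Real.exp_pos _
  have hPpos : ∀ y, 0 < P y t₀ := by
    intro y
    obtain ⟨ℓ₀, hℓ₀⟩ : ∃ ℓ, 0 < ν ℓ := by
      by_contra h
      push_neg at h
      have h0 : ∑ ℓ, ν ℓ = 0 := Finset.sum_eq_zero fun ℓ _ => le_antisymm (h ℓ) (hν0 ℓ)
      rw [h0] at hν1; exact zero_ne_one hν1
    rw [hP]
    exact Finset.sum_pos' (fun ℓ _ => mul_nonneg (hν0 ℓ) (hpcpos ℓ y).le)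
      ⟨ℓ₀, Finset.mem_univ _, mul_pos hℓ₀ (hpcpos ℓ₀ y)⟩
  -- closed form of the spatial function
  have key : ∀ (i : Fin n) (s : ℝ),
      γ i (Function.update x i s) * P (Function.update x i s) t₀
        = -∑ ℓ, ν ℓ * (Real.exp (-(ψ ℓ (Θ ℓ t₀))) *
            ⟪Θdot ℓ, ∫ ξ in Set.Iic s, g ℓ i ξ⟫) := by
    intro i s
    set y := Function.update x i s with hy
    have hterm : ∀ ℓ, pc ℓ y t₀ * ⟪Θdot ℓ, I ℓ i y⟫
        = Real.exp (-(ψ ℓ (Θ ℓ t₀))) * ⟪Θdot ℓ, ∫ ξ in Set.Iic s, g ℓ i ξ⟫ := by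
      intro ℓ
      have hyi : y i = s := Function.update_self i s x
      have hsm : pc ℓ y t₀ • I ℓ i y
          = Real.exp (-(ψ ℓ (Θ ℓ t₀))) • ∫ ξ in Set.Iic s, g ℓ i ξ := by
        rw [hI, hyi, ← MeasureTheory.integral_smul, ← MeasureTheory.integral_smul]
        refine MeasureTheory.setIntegral_congr_fun measurableSet_Iic fun ξ _ => ?_
        have hupd2 : Function.update y i ξ = Function.update x i ξ := by
          rw [hy, Function.update_idem]
        rw [hupd2, hgdef]
        simp only [smul_smul]
        congr 1
        rw [hpc, inner_sub_right, ← Real.exp_add, ← Real.exp_add]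
        ring_nf
      calc pc ℓ y t₀ * ⟪Θdot ℓ, I ℓ i y⟫
          = ⟪Θdot ℓ, pc ℓ y t₀ • I ℓ i y⟫ := (real_inner_smul_right _ _ _).symm
        _ = ⟪Θdot ℓ, Real.exp (-(ψ ℓ (Θ ℓ t₀))) • ∫ ξ in Set.Iic s, g ℓ i ξ⟫ := by rw [hsm]
        _ = Real.exp (-(ψ ℓ (Θ ℓ t₀))) * ⟪Θdot ℓ, ∫ ξ in Set.Iic s, g ℓ i ξ⟫ :=
            real_inner_smul_right _ _ _
    rw [hγ]
    have hPy : P y t₀ ≠ 0 := (hPpos y).ne'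
    have hPcancel : -(1 / P y t₀) * (∑ ℓ, ν ℓ * pc ℓ y t₀ * ⟪Θdot ℓ, I ℓ i y⟫) * P y t₀
        = -(∑ ℓ, ν ℓ * pc ℓ y t₀ * ⟪Θdot ℓ, I ℓ i y⟫) := by
      field_simp
    rw [hPcancel, neg_inj]
    refine Finset.sum_congr rfl fun ℓ _ => ?_
    rw [mul_assoc, hterm]
  -- spatial derivatives
  have hspace : ∀ i : Fin n,
      HasDerivAt (fun s : ℝ => γ i (Function.update x i s) * P (Function.update x i s) t₀)
        (-∑ ℓ, ν ℓ * pc ℓ x t₀ * ⟪Θdot ℓ, φ ℓ i x⟫) (x i) := by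
    intro i
    have hD : HasDerivAt
        (fun s : ℝ => -∑ ℓ, ν ℓ * (Real.exp (-(ψ ℓ (Θ ℓ t₀))) *
          ⟪Θdot ℓ, ∫ ξ in Set.Iic s, g ℓ i ξ⟫))
        (-∑ ℓ, ν ℓ * (Real.exp (-(ψ ℓ (Θ ℓ t₀))) * ⟪Θdot ℓ, g ℓ i (x i)⟫)) (x i) := by
      refine HasDerivAt.neg (HasDerivAt.fun_sum fun ℓ _ => ?_)
      have hinner : HasDerivAt (fun s : ℝ => ⟪Θdot ℓ, ∫ ξ in Set.Iic s, g ℓ i ξ⟫)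
          ⟪Θdot ℓ, g ℓ i (x i)⟫ (x i) :=
        (innerSL ℝ (Θdot ℓ)).hasFDerivAt.comp_hasDerivAt _ (hF ℓ i (x i))
      exact (hinner.const_mul _).const_mul _
    have hval : ∀ ℓ, ν ℓ * (Real.exp (-(ψ ℓ (Θ ℓ t₀))) * ⟪Θdot ℓ, g ℓ i (x i)⟫)
        = ν ℓ * pc ℓ x t₀ * ⟪Θdot ℓ, φ ℓ i x⟫ := by
      intro ℓ
      have hx : Function.update x i (x i) = x := Function.update_eq_self i x
      rw [hgdef]
      simp only [hx]
      rw [real_inner_smul_right, hpc, Real.exp_sub, Real.exp_neg]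
      field_simp
    have hD2 : HasDerivAt
        (fun s : ℝ => -∑ ℓ, ν ℓ * (Real.exp (-(ψ ℓ (Θ ℓ t₀))) *
          ⟪Θdot ℓ, ∫ ξ in Set.Iic s, g ℓ i ξ⟫))
        (-∑ ℓ, ν ℓ * pc ℓ x t₀ * ⟪Θdot ℓ, φ ℓ i x⟫) (x i) := by
      have := hD
      rw [Finset.sum_congr rfl fun ℓ _ => hval ℓ] at this
      exact this
    exact hD2.congr_of_eventuallyEq (Filter.Eventually.of_forall fun s => key i s)
  -- time derivative
  have htime : HasDerivAt (fun t => P x t)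
      (∑ ℓ, ν ℓ * (pc ℓ x t₀ * ⟪Θdot ℓ, c ℓ x - gψ ℓ⟫)) t₀ := by
    have h1 : ∀ ℓ, HasDerivAt (fun t => pc ℓ x t)
        (pc ℓ x t₀ * ⟪Θdot ℓ, c ℓ x - gψ ℓ⟫) t₀ := by
      intro ℓ
      have ha : HasDerivAt (fun t => ⟪Θ ℓ t, c ℓ x⟫) ⟪Θdot ℓ, c ℓ x⟫ t₀ := by
        have h := (innerSL ℝ (c ℓ x)).hasFDerivAt.comp_hasDerivAt t₀ (hΘ ℓ)
        simp only [Function.comp_def, innerSL_apply_apply] at h ⊢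
        simpa [real_inner_comm] using h
      have hb : HasDerivAt (fun t => ψ ℓ (Θ ℓ t)) ⟪gψ ℓ, Θdot ℓ⟫ t₀ :=
        (hψ ℓ).comp_hasDerivAt t₀ (hΘ ℓ)
      have hin : HasDerivAt (fun t => ⟪Θ ℓ t, c ℓ x⟫ - ψ ℓ (Θ ℓ t))
          ⟪Θdot ℓ, c ℓ x - gψ ℓ⟫ t₀ := by
        have := ha.fun_sub hb
        simpa [inner_sub_right, real_inner_comm] using this
      have hexp := hin.exp
      simp only [hpc]
      exact hexp
    simp only [hP]
    exact HasDerivAt.fun_sum fun ℓ _ => (h1 ℓ).const_mul (ν ℓ)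
  -- assemble
  refine ⟨htime.differentiableAt, fun i => (hspace i).differentiableAt, ?_⟩
  rw [htime.deriv]
  have hderivs : ∀ i : Fin n,
      deriv (fun ξ : ℝ => γ i (Function.update x i ξ) * P (Function.update x i ξ) t₀) (x i)
        = -∑ ℓ, ν ℓ * pc ℓ x t₀ * ⟪Θdot ℓ, φ ℓ i x⟫ := fun i => (hspace i).deriv
  rw [Finset.sum_congr rfl fun i _ => hderivs i]
  rw [Finset.sum_neg_distrib, neg_neg, Finset.sum_comm]
  refine Finset.sum_congr rfl fun ℓ _ => ?_
  rw [← Finset.mul_sum, hφsum ℓ x, mul_assoc]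
end

section
/- (Theorem 4: SDE drift with prescribed mixture-exponential-family marginal law, stated as the Fokker–Planck identity it asserts.) Fix n, k ≥ 1, t₀ ∈ ℝ and x ∈ ℝⁿ. Let a : ℝⁿ → ℝ^{n×n} be twice continuously differentiable. For each ℓ = 1,…,k let ℋ_ℓ be a real inner product space, let c^ℓ : ℝⁿ → ℋ_ℓ be twice continuously differentiable, let Θ^ℓ : ℝ → ℋ_ℓ be differentiable at t₀ with derivative Θ̇^ℓ, and let ψ_ℓ : ℋ_ℓ → ℝ have a gradient ∇ψ_ℓ(Θ^ℓ_{t₀}) at Θ^ℓ_{t₀}. Let ν ∈ Δ_k and set p_ℓ(y,t) := exp(⟨Θ^ℓ_t, c^ℓ(y)⟩ − ψ_ℓ(Θ^ℓ_t)), p(y,t) := ∑_ℓ ν_ℓ p_ℓ(y,t). For i = 1,…,n let φ_i^ℓ : ℝⁿ → ℋ_ℓ be continuous with (i) ∑_{i=1}^n ⟨Θ̇^ℓ, φ_i^ℓ(y)⟩ = ⟨Θ̇^ℓ, c^ℓ(y) − ∇ψ_ℓ(Θ^ℓ_{t₀})⟩ for every y ∈ ℝⁿ, and (ii) for every i, ℓ,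 s ∈ ℝ the map ξ ↦ φ_i^ℓ(x^{i←ξ})·exp(⟨Θ^ℓ_{t₀}, c^ℓ(x^{i←ξ})⟩) Bochner integrable on (−∞, s]. Define I_i^ℓ(y) := ∫_{−∞}^{y_i} φ_i^ℓ(y^{i←ξ})·exp(⟨Θ^ℓ_{t₀}, c^ℓ(y^{i←ξ}) − c^ℓ(y)⟩) dξ, and the drift u_i(y) := (1/2)∑_j ∂_{y_j}a_{ij}(y) + (1/2)∑_j a_{ij}(y)·(∂_{y_j}p(y,t₀))/p(y,t₀) − (1/p(y,t₀))·∑_ℓ ν_ℓ p_ℓ(y,t₀)·⟨Θ̇^ℓ, I_i^ℓ(y)⟩. Then p satisfies the Kolmogorov forward equation at (x,t₀): ∂_t p(x,t₀) = −∑_{i=1}^n ∂_{x_i}( u_i · p(·,t₀) )(x) + (1/2)·∑_{i,j=1}^n ∂_{x_i}∂_{x_j}( a_{ij} · p(·,t₀) )(x). -/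
open MeasureTheory
open scoped RealInnerProductSpace BigOperators

/-- Partial derivative in the `i`-th coordinate direction, defined as the derivative of the
one-variable slice `ξ ↦ F (x with i-th coordinate replaced by ξ)`. -/
noncomputable def pderivCoord {n : ℕ} (i : Fin n) (F : (Fin n → ℝ) → ℝ)
    (y : Fin n → ℝ) : ℝ :=
  deriv (fun ξ : ℝ => F (Function.update y i ξ)) (y i)

lemma hasDerivAt_slice {n : ℕ} {F : (Fin n → ℝ) → ℝ} (hF : Differentiable ℝ F)
    (i : Fin n) (y : Fin n → ℝ) (ξ : ℝ) :
    HasDerivAt (fun t => F (Function.update y i t))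
      (fderiv ℝ F (Function.update y i ξ) (Pi.single i 1)) ξ :=
  (hF _).hasFDerivAt.comp_hasDerivAt ξ (hasDerivAt_update y i ξ)

lemma pderivCoord_eq_fderiv {n : ℕ} {F : (Fin n → ℝ) → ℝ} (hF : Differentiable ℝ F)
    (i : Fin n) (y : Fin n → ℝ) :
    pderivCoord i F y = fderiv ℝ F y (Pi.single i 1) := by
  have h := (hasDerivAt_slice hF i y (y i)).deriv
  rw [Function.update_eq_self] at h
  exact h

lemma pderivCoord_mul {n : ℕ} {F G : (Fin n → ℝ) → ℝ} (hF : Differentiable ℝ F)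
    (hG : Differentiable ℝ G) (j : Fin n) (y : Fin n → ℝ) :
    pderivCoord j (fun z => F z * G z) y
      = pderivCoord j F y * G y + F y * pderivCoord j G y := by
  have hF' := hasDerivAt_slice hF j y (y j)
  have hG' := hasDerivAt_slice hG j y (y j)
  have h := (hF'.mul hG').deriv
  rw [Function.update_eq_self] at h
  rw [pderivCoord, pderivCoord_eq_fderiv hF, pderivCoord_eq_fderiv hG]
  exact h

lemma differentiable_fderiv_apply {n : ℕ} {F : (Fin n → ℝ) → ℝ} (hF : ContDiff ℝ 2 F)
    (v : Fin n → ℝ) : Differentiable ℝ (fun y => fderiv ℝ F y v) := by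
  have h1 : ContDiff ℝ 1 (fderiv ℝ F) := hF.fderiv_right (by norm_num)
  exact fun y => ((h1.differentiable one_ne_zero) y).clm_apply (differentiableAt_const v)

lemma hasDerivAt_integral_Iic {E : Type*} [NormedAddCommGroup E] [NormedSpace ℝ E]
    [CompleteSpace E]
    (f : ℝ → E) (hf : Continuous f) (hint : ∀ s : ℝ, IntegrableOn f (Set.Iic s)) (b : ℝ) :
    HasDerivAt (fun ξ => ∫ η in Set.Iic ξ, f η) (f b) b := by
  have key : (fun ξ => ∫ η in Set.Iic ξ, f η)
      = fun ξ => (∫ η in Set.Iic b, f η) + ∫ η in b..ξ, f η := by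
    funext ξ
    rw [← intervalIntegral.integral_Iic_sub_Iic (hint b) (hint ξ)]
    abel
  rw [key]
  have h := intervalIntegral.integral_hasDerivAt_right
    (hf.intervalIntegrable b b) (hf.stronglyMeasurableAtFilter _ _) hf.continuousAt
  exact h.const_add _

/-- Theorem 4 of the paper, stated as the Fokker–Planck identity it asserts: the mixture
of exponential-family densities `p(y,t) = ∑_ℓ ν_ℓ exp(⟪Θ^ℓ_t, c^ℓ(y)⟫ − ψ_ℓ(Θ^ℓ_t))`
satisfies the Kolmogorov forward equation at `(x,t₀)` for the drift `u` built from the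
integral terms `I_i^ℓ`:
`∂_t p(x,t₀) = −∑_i ∂_{x_i}(u_i p(·,t₀))(x) + (1/2)∑_{i,j} ∂_{x_i}∂_{x_j}(a_{ij} p(·,t₀))(x)`. -/
theorem sde_prescribed_marginal_law {n k : ℕ} (hn : 1 ≤ n) (hk : 1 ≤ k) (t₀ : ℝ)
    (x : Fin n → ℝ)
    (a : (Fin n → ℝ) → Matrix (Fin n) (Fin n) ℝ)
    (ha : ∀ i j, ContDiff ℝ 2 (fun y => a y i j))
    (H : Fin k → Type*) [∀ ℓ, NormedAddCommGroup (H ℓ)]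
    [∀ ℓ, InnerProductSpace ℝ (H ℓ)] [∀ ℓ, CompleteSpace (H ℓ)]
    (c : ∀ ℓ, (Fin n → ℝ) → H ℓ) (hc : ∀ ℓ, ContDiff ℝ 2 (c ℓ))
    (Θ : ∀ ℓ, ℝ → H ℓ) (Θdot : ∀ ℓ, H ℓ)
    (hΘ : ∀ ℓ, HasDerivAt (Θ ℓ) (Θdot ℓ) t₀)
    (ψ : ∀ ℓ, H ℓ → ℝ) (gψ : ∀ ℓ, H ℓ)
    (hψ : ∀ ℓ, HasFDerivAt (ψ ℓ) (innerSL ℝ (gψ ℓ)) (Θ ℓ t₀))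
    (ν : Fin k → ℝ) (hν0 : ∀ ℓ, 0 ≤ ν ℓ) (hν1 : ∑ ℓ, ν ℓ = 1)
    (pc : Fin k → (Fin n → ℝ) → ℝ → ℝ)
    (hpc : ∀ ℓ y t, pc ℓ y t = Real.exp (⟪Θ ℓ t, c ℓ y⟫ - ψ ℓ (Θ ℓ t)))
    (P : (Fin n → ℝ) → ℝ → ℝ)
    (hP : ∀ y t, P y t = ∑ ℓ, ν ℓ * pc ℓ y t)
    (φ : ∀ ℓ, Fin n → (Fin n → ℝ) → H ℓ)
    (hφcont : ∀ ℓ i, Continuous (φ ℓ i))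
    (hφsum : ∀ ℓ, ∀ y : Fin n → ℝ,
      ∑ i, ⟪Θdot ℓ, φ ℓ i y⟫ = ⟪Θdot ℓ, c ℓ y - gψ ℓ⟫)
    (hφint : ∀ ℓ, ∀ i : Fin n, ∀ s : ℝ,
      IntegrableOn
        (fun ξ : ℝ =>
          Real.exp (⟪Θ ℓ t₀, c ℓ (Function.update x i ξ)⟫) • φ ℓ i (Function.update x i ξ))
        (Set.Iic s))
    (I : ∀ ℓ, Fin n → (Fin n → ℝ) → H ℓ)
    (hI : ∀ ℓ i (y : Fin n → ℝ), I ℓ i y =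
      ∫ ξ in Set.Iic (y i),
        Real.exp (⟪Θ ℓ t₀, c ℓ (Function.update y i ξ) - c ℓ y⟫) •
          φ ℓ i (Function.update y i ξ))
    (u : Fin n → (Fin n → ℝ) → ℝ)
    (hu : ∀ i y, u i y =
      (1 / 2 : ℝ) * ∑ j, pderivCoord j (fun z => a z i j) y
        + (1 / 2 : ℝ) * ∑ j, a y i j * (pderivCoord j (fun z => P z t₀) y / P y t₀)
        - (1 / P y t₀) * ∑ ℓ, ν ℓ * pc ℓ y t₀ * ⟪Θdot ℓ, I ℓ i y⟫) :
    HasDerivAt (fun t => P x t)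
      (-∑ i, pderivCoord i (fun y => u i y * P y t₀) x
        + (1 / 2 : ℝ) * ∑ i, ∑ j,
            pderivCoord i (fun y => pderivCoord j (fun z => a z i j * P z t₀) y) x)
      t₀ := by
  classical
  -- positivity
  have hpcpos : ∀ ℓ y, 0 < pc ℓ y t₀ := fun ℓ y => by rw [hpc]; exact Real.exp_pos _
  have hPpos : ∀ y, 0 < P y t₀ := by
    intro y
    rw [hP]
    have hex : ∃ ℓ ∈ Finset.univ, 0 < ν ℓ * pc ℓ y t₀ := by
      by_contra h
      push_neg at h
      have hz : ∀ ℓ, ν ℓ = 0 := by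
        intro ℓ
        rcases (hν0 ℓ).lt_or_eq with h' | h'
        · exact absurd (mul_pos h' (hpcpos ℓ y)) (not_lt.2 (h ℓ (Finset.mem_univ ℓ)))
        · exact h'.symm
      rw [Finset.sum_congr rfl fun ℓ _ => hz ℓ] at hν1
      simp at hν1
    exact Finset.sum_pos' (fun ℓ _ => mul_nonneg (hν0 ℓ) (hpcpos ℓ y).le) hex
  -- smoothness
  have hpc2 : ∀ ℓ, ContDiff ℝ 2 (fun y => pc ℓ y t₀) := by
    intro ℓ
    have h1 : ContDiff ℝ 2 (fun y : Fin n → ℝ => ⟪Θ ℓ t₀, c ℓ y⟫ - ψ ℓ (Θ ℓ t₀)) :=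
      (((innerSL ℝ (Θ ℓ t₀)).contDiff).comp (hc ℓ)).sub contDiff_const
    have h2 : ContDiff ℝ 2 (fun y : Fin n → ℝ =>
        Real.exp (⟪Θ ℓ t₀, c ℓ y⟫ - ψ ℓ (Θ ℓ t₀))) :=
      (Real.contDiff_exp.of_le le_top).comp h1
    have heq : (fun y => pc ℓ y t₀)
        = fun y : Fin n → ℝ => Real.exp (⟪Θ ℓ t₀, c ℓ y⟫ - ψ ℓ (Θ ℓ t₀)) :=
      funext fun y => hpc ℓ y t₀
    rw [heq]; exact h2
  have hPt : ContDiff ℝ 2 (fun y => P y t₀) := by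
    have heq : (fun y => P y t₀) = fun y => ∑ ℓ, ν ℓ * pc ℓ y t₀ :=
      funext fun y => hP y t₀
    rw [heq]
    exact ContDiff.sum fun ℓ _ => contDiff_const.mul (hpc2 ℓ)
  have hprod : ∀ (i j : Fin n), ContDiff ℝ 2 (fun z => a z i j * P z t₀) :=
    fun i j => (ha i j).mul hPt
  -- derivative of the integral term along the i-th slice
  have hGd : ∀ i : Fin n,
      HasDerivAt (fun ξ => ∑ ℓ, ν ℓ * pc ℓ (Function.update x i ξ) t₀ *
          ⟪Θdot ℓ, I ℓ i (Function.update x i ξ)⟫)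
        (∑ ℓ, ν ℓ * pc ℓ x t₀ * ⟪Θdot ℓ, φ ℓ i x⟫) (x i) := by
    intro i
    refine HasDerivAt.fun_sum fun ℓ _ => ?_
    set e : ℝ := Real.exp (-(ψ ℓ (Θ ℓ t₀))) with he
    set f : ℝ → H ℓ := fun η =>
      Real.exp (⟪Θ ℓ t₀, c ℓ (Function.update x i η)⟫) • φ ℓ i (Function.update x i η) with hf
    have hupd : Continuous (fun η : ℝ => Function.update x i η) :=
      continuous_const.update i continuous_id
    have hfcont : Continuous f :=
      (Real.continuous_exp.comp
        (((innerSL ℝ (Θ ℓ t₀)).continuous).comp ((hc ℓ).continuous.comp hupd))).smul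
        ((hφcont ℓ i).comp hupd)
    have hJ : HasDerivAt (fun ξ => ∫ η in Set.Iic ξ, f η) (f (x i)) (x i) :=
      hasDerivAt_integral_Iic f hfcont (hφint ℓ i) (x i)
    have hsm : ∀ ξ : ℝ, pc ℓ (Function.update x i ξ) t₀ • I ℓ i (Function.update x i ξ)
        = e • ∫ η in Set.Iic ξ, f η := by
      intro ξ
      rw [hI]
      simp only [Function.update_idem, Function.update_self]
      rw [← integral_smul, ← integral_smul]
      refine setIntegral_congr_fun measurableSet_Iic fun η _ => ?_
      rw [hf]
      simp only
      rw [smul_smul, smul_smul, hpc]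
      congr 1
      rw [inner_sub_right, ← Real.exp_add, ← Real.exp_add]
      congr 1
      ring
    have hslice : ∀ ξ : ℝ,
        ν ℓ * pc ℓ (Function.update x i ξ) t₀ * ⟪Θdot ℓ, I ℓ i (Function.update x i ξ)⟫
          = ν ℓ * ⟪Θdot ℓ, e • ∫ η in Set.Iic ξ, f η⟫ := by
      intro ξ
      rw [mul_assoc, ← real_inner_smul_right, hsm ξ]
    have h3 := HasDerivAt.inner ℝ (hasDerivAt_const (x i) (Θdot ℓ)) (hJ.const_smul e)
    have h4 := h3.const_mul (ν ℓ)
    rw [show (fun ξ => ν ℓ * pc ℓ (Function.update x i ξ) t₀ *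
        ⟪Θdot ℓ, I ℓ i (Function.update x i ξ)⟫)
        = fun ξ => ν ℓ * ⟪Θdot ℓ, e • ∫ η in Set.Iic ξ, f η⟫ from funext hslice]
    refine h4.congr_deriv ?_
    simp only [inner_zero_left, add_zero, hf, Function.update_eq_self]
    rw [real_inner_smul_right, real_inner_smul_right, hpc, he,
      Real.exp_sub, Real.exp_neg]
    ring
  -- the key computation for each coordinate
  have key : ∀ i : Fin n,
      pderivCoord i (fun y => u i y * P y t₀) x
        = (1 / 2 : ℝ) * ∑ j, pderivCoord i
            (fun y => pderivCoord j (fun z => a z i j * P z t₀) y) x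
          - ∑ ℓ, ν ℓ * pc ℓ x t₀ * ⟪Θdot ℓ, φ ℓ i x⟫ := by
    intro i
    have hDrw : ∀ (j : Fin n) (y : Fin n → ℝ),
        pderivCoord j (fun z => a z i j * P z t₀) y
          = fderiv ℝ (fun z => a z i j * P z t₀) y (Pi.single j 1) :=
      fun j y => pderivCoord_eq_fderiv ((hprod i j).differentiable (by norm_num)) j y
    have hfun : (fun y => u i y * P y t₀)
        = fun y => (1 / 2 : ℝ) * ∑ j,
              fderiv ℝ (fun z => a z i j * P z t₀) y (Pi.single j 1)
            - ∑ ℓ, ν ℓ * pc ℓ y t₀ * ⟪Θdot ℓ, I ℓ i y⟫ := by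
      funext y
      have hP0 : P y t₀ ≠ 0 := (hPpos y).ne'
      have hDm : ∀ j : Fin n, fderiv ℝ (fun z => a z i j * P z t₀) y (Pi.single j 1)
          = pderivCoord j (fun z => a z i j) y * P y t₀
            + a y i j * pderivCoord j (fun z => P z t₀) y := by
        intro j
        rw [← hDrw j y]
        exact pderivCoord_mul ((ha i j).differentiable (by norm_num))
          (hPt.differentiable (by norm_num)) j y
      rw [hu]
      simp only [hDm]
      rw [Finset.sum_add_distrib, ← Finset.sum_mul]
      have hsum2 : ∑ j, a y i j * (pderivCoord j (fun z => P z t₀) y / P y t₀)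
          = (∑ j, a y i j * pderivCoord j (fun z => P z t₀) y) / P y t₀ := by
        rw [Finset.sum_div]
        exact Finset.sum_congr rfl fun j _ => (mul_div_assoc _ _ _).symm
      rw [hsum2]
      field_simp
    rw [hfun]
    have hDj : ∀ j : Fin n, HasDerivAt
        (fun ξ => fderiv ℝ (fun z => a z i j * P z t₀) (Function.update x i ξ)
          (Pi.single j 1))
        (pderivCoord i (fun y => pderivCoord j (fun z => a z i j * P z t₀) y) x) (x i) := by
      intro j
      have hdiff : DifferentiableAt ℝ
          (fun ξ => fderiv ℝ (fun z => a z i j * P z t₀) (Function.update x i ξ)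
            (Pi.single j 1)) (x i) :=
        (differentiable_fderiv_apply (hprod i j) (Pi.single j 1) _).comp _
          (hasDerivAt_update x i (x i)).differentiableAt
      have hpe : pderivCoord i (fun y => pderivCoord j (fun z => a z i j * P z t₀) y) x
          = deriv (fun ξ => fderiv ℝ (fun z => a z i j * P z t₀) (Function.update x i ξ)
              (Pi.single j 1)) (x i) := by
        simp only [hDrw]
        rfl
      rw [hpe]
      exact hdiff.hasDerivAt
    have hsumD : HasDerivAt
        (fun ξ => ∑ j, fderiv ℝ (fun z => a z i j * P z t₀) (Function.update x i ξ)
          (Pi.single j 1))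
        (∑ j, pderivCoord i (fun y => pderivCoord j (fun z => a z i j * P z t₀) y) x)
        (x i) := HasDerivAt.fun_sum fun j _ => hDj j
    have hsum := (HasDerivAt.const_mul (1 / 2 : ℝ) hsumD).sub (hGd i)
    exact hsum.deriv
  -- time derivative
  have hT : HasDerivAt (fun t => P x t)
      (∑ ℓ, ν ℓ * pc ℓ x t₀ * ⟪Θdot ℓ, c ℓ x - gψ ℓ⟫) t₀ := by
    have hfun : (fun t => P x t)
        = fun t => ∑ ℓ, ν ℓ * Real.exp (⟪Θ ℓ t, c ℓ x⟫ - ψ ℓ (Θ ℓ t)) := by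
      funext t
      rw [hP]
      exact Finset.sum_congr rfl fun ℓ _ => by rw [hpc]
    rw [hfun]
    refine HasDerivAt.fun_sum fun ℓ _ => ?_
    have hinner : HasDerivAt (fun t => ⟪Θ ℓ t, c ℓ x⟫) (⟪Θdot ℓ, c ℓ x⟫) t₀ := by
      simpa using HasDerivAt.inner ℝ (hΘ ℓ) (hasDerivAt_const t₀ (c ℓ x))
    have hψt : HasDerivAt (fun t => ψ ℓ (Θ ℓ t)) (⟪gψ ℓ, Θdot ℓ⟫) t₀ := by
      have h := (hψ ℓ).comp_hasDerivAt t₀ (hΘ ℓ)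
      simp only [innerSL_apply_apply] at h
      exact h
    have hexp := ((hinner.sub hψt).exp).const_mul (ν ℓ)
    refine hexp.congr_deriv ?_
    rw [hpc, inner_sub_right, real_inner_comm (gψ ℓ) (Θdot ℓ)]
    simp only [Pi.sub_apply]
    ring
  have hg : ∑ i : Fin n, ∑ ℓ, ν ℓ * pc ℓ x t₀ * ⟪Θdot ℓ, φ ℓ i x⟫
      = ∑ ℓ, ν ℓ * pc ℓ x t₀ * ⟪Θdot ℓ, c ℓ x - gψ ℓ⟫ := by
    rw [Finset.sum_comm]
    refine Finset.sum_congr rfl fun ℓ _ => ?_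
    rw [← Finset.mul_sum, hφsum ℓ x]
  have hval : (-∑ i, pderivCoord i (fun y => u i y * P y t₀) x
      + (1 / 2 : ℝ) * ∑ i, ∑ j,
          pderivCoord i (fun y => pderivCoord j (fun z => a z i j * P z t₀) y) x)
      = ∑ ℓ, ν ℓ * pc ℓ x t₀ * ⟪Θdot ℓ, c ℓ x - gψ ℓ⟫ := by
    simp only [key]
    rw [Finset.sum_sub_distrib, ← Finset.mul_sum, ← hg]
    ring
  rw [hval]
  exact hT
end

section
/- (Lemma: admissible choice of the functions φ for multivariate normal families.) Let n ≥ 1, η, η̇ ∈ ℝⁿ, and let θ, θ̇ be symmetric real n×n matrices with θ invertible. Set ∇_ηψ := −(1/2)θ⁻¹η and ∇_θψ := θ⁻¹((1/4)ηηᵀθ⁻¹ − (1/2)I_n). For i = 1,…,n define φ_{1,i}(x) := θ⁻¹E_i θ (x − ∇_ηψ) ∈ ℝⁿ and φ_{2,i}(x) := θ⁻¹E_i ( θ(xxᵀ − ∇_θψ)θ − (1/2)θxηᵀ + (1/2)ηxᵀθ ) θ⁻¹ ∈ ℝ^{n×n}. Then for every x ∈ ℝⁿ, ∑_{i=1}^n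 ( η̇ᵀφ_{1,i}(x) + ⟨θ̇, φ_{2,i}(x)⟩_F ) = η̇ᵀ(x − ∇_ηψ) + ⟨θ̇, xxᵀ − ∇_θψ⟩_F. -/
open Matrix

/-- Lemma `choose_varphi` (Appendix C): the functions
`φ_{1,i}(x) = θ⁻¹E_iθ(x − ∇_ηψ)` and
`φ_{2,i}(x) = θ⁻¹E_i(θ(xxᵀ − ∇_θψ)θ − (1/2)θxηᵀ + (1/2)ηxᵀθ)θ⁻¹`
satisfy `∑_i (η̇ᵀφ_{1,i}(x) + ⟨θ̇, φ_{2,i}(x)⟩_F) = η̇ᵀ(x − ∇_ηψ) + ⟨θ̇, xxᵀ − ∇_θψ⟩_F`. -/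
theorem choose_varphi {n : ℕ} (hn : 1 ≤ n)
    (η ηdot : Fin n → ℝ) (θ θdot : Matrix (Fin n) (Fin n) ℝ)
    (hθ : θ.IsSymm) (hθdot : θdot.IsSymm) (hθinv : IsUnit θ.det)
    (gη : Fin n → ℝ)
    (hgη : gη = (-(1 / 2) : ℝ) • θ⁻¹.mulVec η)
    (gθ : Matrix (Fin n) (Fin n) ℝ)
    (hgθ : gθ = θ⁻¹ * ((1 / 4 : ℝ) • (vecMulVec η η * θ⁻¹) - (1 / 2 : ℝ) • 1))
    (φ1 : Fin n → (Fin n → ℝ) → (Fin n → ℝ))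
    (hφ1 : ∀ i x, φ1 i x = (θ⁻¹ * single i i 1 * θ).mulVec (x - gη))
    (φ2 : Fin n → (Fin n → ℝ) → Matrix (Fin n) (Fin n) ℝ)
    (hφ2 : ∀ i x, φ2 i x =
      θ⁻¹ * single i i 1 *
        (θ * (vecMulVec x x - gθ) * θ
          - (1 / 2 : ℝ) • (θ * vecMulVec x η) + (1 / 2 : ℝ) • (vecMulVec η x * θ)) * θ⁻¹) :
    ∀ x : Fin n → ℝ,
      ∑ i, (ηdot ⬝ᵥ φ1 i x + (θdotᵀ * φ2 i x).trace)
        = ηdot ⬝ᵥ (x - gη) + (θdotᵀ * (vecMulVec x x - gθ)).trace := by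
  intro x
  have hE : ∑ i : Fin n, single i i (1:ℝ) = 1 := by
    ext a b
    simp [Matrix.sum_apply, Matrix.single, Matrix.one_apply, Finset.filter_and,
      Finset.filter_eq']
    split <;> simp_all [Finset.filter_eq']
  have key : ∀ (B C : Matrix (Fin n) (Fin n) ℝ),
      ∑ i, B * single i i 1 * C = B * C := by
    intro B C
    rw [← Finset.sum_mul, ← Finset.mul_sum, hE, mul_one]
  have hinv : θ⁻¹ * θ = 1 := nonsing_inv_mul θ hθinv
  have hinv' : θ * θ⁻¹ = 1 := mul_nonsing_inv θ hθinv
  have hθit : θ⁻¹ᵀ = θ⁻¹ := by rw [transpose_nonsing_inv, hθ.eq]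
  set A := vecMulVec x x - gθ with hA
  set M := θ * A * θ - (1 / 2 : ℝ) • (θ * vecMulVec x η)
      + (1 / 2 : ℝ) • (vecMulVec η x * θ) with hM
  rw [Finset.sum_add_distrib]
  have h1 : ∑ i, ηdot ⬝ᵥ φ1 i x = ηdot ⬝ᵥ (x - gη) := by
    simp only [hφ1]
    have : ∑ i, ηdot ⬝ᵥ (θ⁻¹ * single i i 1 * θ).mulVec (x - gη)
        = ηdot ⬝ᵥ (∑ i, θ⁻¹ * single i i 1 * θ).mulVec (x - gη) := by
      simp only [dotProduct, mulVec, Matrix.sum_apply, Finset.mul_sum, Finset.sum_mul]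
      rw [Finset.sum_comm]
      congr 1; ext j; rw [Finset.sum_comm]
    rw [this, key, hinv, one_mulVec]
  have hMm : θ⁻¹ * (M * θ⁻¹) = A - (1 / 2 : ℝ) • (vecMulVec x η * θ⁻¹)
      + (1 / 2 : ℝ) • (θ⁻¹ * vecMulVec η x) := by
    rw [hM]
    rw [add_mul, sub_mul, smul_mul_assoc, smul_mul_assoc,
      mul_assoc (θ * A) θ θ⁻¹, hinv', mul_one,
      mul_assoc θ (vecMulVec x η) θ⁻¹,
      mul_assoc (vecMulVec η x) θ θ⁻¹, hinv', mul_one]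
    rw [mul_add, mul_sub, mul_smul_comm, mul_smul_comm,
      ← mul_assoc θ⁻¹ θ A, hinv, one_mul, ← mul_assoc θ⁻¹ θ (vecMulVec x η * θ⁻¹),
      hinv, one_mul]
  have hcross : (θdotᵀ * (vecMulVec x η * θ⁻¹)).trace
      = (θdotᵀ * (θ⁻¹ * vecMulVec η x)).trace := by
    have hvt : (vecMulVec x η)ᵀ = vecMulVec η x := by
      ext a b; simp [vecMulVec, mul_comm]
    have ht : (θdotᵀ * (vecMulVec x η * θ⁻¹))ᵀ = θ⁻¹ * vecMulVec η x * θdot := by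
      rw [transpose_mul, transpose_mul, hθit, transpose_transpose, hvt]
    rw [← trace_transpose (θdotᵀ * (vecMulVec x η * θ⁻¹)), ht,
      trace_mul_comm (θ⁻¹ * vecMulVec η x) θdot]
    conv_lhs => rw [← hθdot.eq]
  have h2 : ∑ i, (θdotᵀ * φ2 i x).trace = (θdotᵀ * A).trace := by
    simp only [hφ2, ← hA, ← hM]
    have : ∀ i : Fin n, θ⁻¹ * single i i 1 * M * θ⁻¹
        = θ⁻¹ * single i i 1 * (M * θ⁻¹) := fun i => by rw [mul_assoc]
    simp only [this]
    rw [← trace_sum, ← Finset.mul_sum, key, hMm]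
    rw [mul_add, mul_sub, trace_add, trace_sub, mul_smul_comm, mul_smul_comm,
      trace_smul, trace_smul, hcross]
    ring
  rw [h1, h2]
end

section
/- (Lemma: closed form of the first integral term for Gaussian families.) Let n ≥ 1, η ∈ ℝⁿ, and let θ be a symmetric negative definite real n×n matrix. For y ∈ ℝⁿ set z(y) := ηᵀy + yᵀθy, and define φ_{1,i}(y) := θ⁻¹E_i θ (y + (1/2)θ⁻¹η). Then for every x ∈ ℝⁿ, every i ∈ {1,…,n} and every s ∈ ℝ, the ℝⁿ-valued function ξ ↦ φ_{1,i}(x^{i←ξ})·exp( z(x^{i←ξ}) − z(x) ) is Bochner integrable on (−∞, s], and ∫_{−∞}^{s} φ_{1,i}(x^{i←ξ})·exp( z(x^{i←ξ}) − z(x) ) dξ = (1/2)·θ⁻¹e_i·exp( z(x^{i←s}) − z(x) ). -/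
open Matrix MeasureTheory

private lemma quad_tendsto {a b c : ℝ} (ha : a < 0) :
    Filter.Tendsto (fun ξ : ℝ => a * ξ ^ 2 + b * ξ + c) Filter.atBot Filter.atBot := by
  have ha' : a ≠ 0 := ne_of_lt ha
  have key : ∀ ξ : ℝ, a * ξ ^ 2 + b * ξ + c
      = a * ((ξ + b / (2 * a)) * (ξ + b / (2 * a))) + (c - a * (b / (2 * a)) ^ 2) := by
    intro ξ; field_simp; ring
  simp only [key]
  apply Filter.tendsto_atBot_add_const_right
  have h1 : Filter.Tendsto (fun ξ : ℝ => ξ + b / (2 * a)) Filter.atBot Filter.atBot :=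
    Filter.tendsto_atBot_add_const_right _ _ Filter.tendsto_id
  exact (h1.atBot_mul_atBot₀ h1).const_mul_atTop_of_neg ha

private lemma quad_integral (a b c : ℝ) (ha : a < 0) (s : ℝ) :
    IntegrableOn (fun ξ : ℝ => (a * ξ + b / 2) * Real.exp (a * ξ ^ 2 + b * ξ + c)) (Set.Iic s) ∧
    ∫ ξ in Set.Iic s, (a * ξ + b / 2) * Real.exp (a * ξ ^ 2 + b * ξ + c)
      = (1 / 2 : ℝ) * Real.exp (a * s ^ 2 + b * s + c) := by
  have ha' : a ≠ 0 := ne_of_lt ha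
  set d : ℝ := b / (2 * a) with hd
  have key : ∀ ξ : ℝ, (a * ξ + b / 2) * Real.exp (a * ξ ^ 2 + b * ξ + c)
      = (a * Real.exp (c - a * d ^ 2)) * ((ξ + d) * Real.exp (-(-a) * (ξ + d) ^ 2)) := by
    intro ξ
    have h2 : a * ξ ^ 2 + b * ξ + c = -(-a) * (ξ + d) ^ 2 + (c - a * d ^ 2) := by
      rw [hd]; field_simp; ring
    have h1 : a * ξ + b / 2 = a * (ξ + d) := by rw [hd]; field_simp
    rw [h2, Real.exp_add, h1]; ring
  have hint : Integrable (fun ξ : ℝ => (a * ξ + b / 2) * Real.exp (a * ξ ^ 2 + b * ξ + c)) := by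
    simp only [key]
    have hbase : Integrable (fun u : ℝ => u * Real.exp (-(-a) * u ^ 2)) :=
      integrable_mul_exp_neg_mul_sq (by linarith : (0:ℝ) < -a)
    have htrans : Integrable (fun ξ : ℝ => (ξ + d) * Real.exp (-(-a) * (ξ + d) ^ 2)) :=
      ((measurePreserving_add_right volume d).integrable_comp
        hbase.aestronglyMeasurable).mpr hbase
    exact htrans.const_mul _
  refine ⟨hint.integrableOn, ?_⟩
  have hderiv : ∀ ξ : ℝ, HasDerivAt (fun t : ℝ => (1 / 2 : ℝ) * Real.exp (a * t ^ 2 + b * t + c))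
      ((a * ξ + b / 2) * Real.exp (a * ξ ^ 2 + b * ξ + c)) ξ := by
    intro ξ
    have h : HasDerivAt (fun t : ℝ => a * t ^ 2 + b * t + c) (2 * a * ξ + b) ξ := by
      have h1 := (((hasDerivAt_pow 2 ξ).const_mul a).add ((hasDerivAt_id ξ).const_mul b)).add_const c
      exact h1.congr_deriv (by simp; ring)
    have h2 := h.exp.const_mul (1 / 2 : ℝ)
    exact h2.congr_deriv (by ring)
  have htends : Filter.Tendsto (fun t : ℝ => (1 / 2 : ℝ) * Real.exp (a * t ^ 2 + b * t + c))
      Filter.atBot (nhds 0) := by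
    have h0 := Real.tendsto_exp_atBot.comp (quad_tendsto ha (b := b) (c := c))
    simpa using h0.const_mul (1 / 2 : ℝ)
  rw [integral_Iic_of_hasDerivAt_of_tendsto' (fun ξ _ => hderiv ξ) hint.integrableOn htends]
  simp

/-- Appendix C, closed form of the first integral term for Gaussian families: with
`z(y) = ηᵀy + yᵀθy` and `φ_{1,i}(y) = θ⁻¹E_iθ(y + (1/2)θ⁻¹η)`, the function
`ξ ↦ φ_{1,i}(x^{i←ξ}) exp(z(x^{i←ξ}) − z(x))` is integrable on `(−∞, s]` and
`∫_{−∞}^s φ_{1,i}(x^{i←ξ}) exp(z(x^{i←ξ}) − z(x)) dξ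
  = (1/2) θ⁻¹ e_i exp(z(x^{i←s}) − z(x))`. -/
theorem gaussian_first_integral_term {n : ℕ} (hn : 1 ≤ n)
    (η : Fin n → ℝ) (θ : Matrix (Fin n) (Fin n) ℝ)
    (hθsymm : θ.IsSymm) (hθneg : (-θ).PosDef)
    (z : (Fin n → ℝ) → ℝ) (hz : ∀ y, z y = η ⬝ᵥ y + y ⬝ᵥ θ.mulVec y)
    (φ1 : Fin n → (Fin n → ℝ) → (Fin n → ℝ))
    (hφ1 : ∀ i y, φ1 i y =
      (θ⁻¹ * Matrix.single i i 1 * θ).mulVec (y + (1 / 2 : ℝ) • θ⁻¹.mulVec η))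
    (x : Fin n → ℝ) (i : Fin n) (s : ℝ) :
    IntegrableOn
      (fun ξ : ℝ =>
        Real.exp (z (Function.update x i ξ) - z x) • φ1 i (Function.update x i ξ))
      (Set.Iic s) ∧
    (∫ ξ in Set.Iic s,
        Real.exp (z (Function.update x i ξ) - z x) • φ1 i (Function.update x i ξ))
      = ((1 / 2 : ℝ) * Real.exp (z (Function.update x i s) - z x)) •
          θ⁻¹.mulVec (Pi.single i 1) := by
  classical
  set e : Fin n → ℝ := Pi.single i 1 with he
  set x0 : Fin n → ℝ := Function.update x i 0 with hx0
  have he_ne : e ≠ 0 := by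
    intro h
    have : e i = 0 := by rw [h]; rfl
    simp [he] at this
  -- θ is invertible
  have hdet : IsUnit θ.det := by
    have hpos := hθneg.det_pos
    rw [Matrix.det_neg] at hpos
    have : θ.det ≠ 0 := by
      intro h; rw [h, mul_zero] at hpos; exact lt_irrefl 0 hpos
    exact isUnit_iff_ne_zero.mpr this
  have hθinv : θ * θ⁻¹ = 1 := Matrix.mul_nonsing_inv θ hdet
  -- symmetry helper
  have hsym : ∀ v w : Fin n → ℝ, v ⬝ᵥ θ.mulVec w = w ⬝ᵥ θ.mulVec v := by
    intro v w
    rw [Matrix.dotProduct_mulVec, ← Matrix.mulVec_transpose, hθsymm.eq, dotProduct_comm]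
  -- θ i i < 0
  have hA : θ i i < 0 := by
    have := (Matrix.posDef_iff_dotProduct_mulVec.mp hθneg).2 he_ne
    have hdot : star e ⬝ᵥ ((-θ) *ᵥ e) = -(θ i i) := by
      simp [he, Matrix.neg_mulVec, Matrix.mulVec_single, single_dotProduct]
    rw [hdot] at this
    linarith
  set A : ℝ := θ i i with hAdef
  set B : ℝ := η i + 2 * (θ.mulVec x0 i) with hBdef
  set C : ℝ := η ⬝ᵥ x0 + x0 ⬝ᵥ θ.mulVec x0 with hCdef
  -- update decomposition
  have hupd : ∀ ξ : ℝ, Function.update x i ξ = x0 + ξ • e := by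
    intro ξ; funext j
    by_cases hj : j = i
    · subst hj; simp [hx0, he]
    · simp [hx0, he, Function.update_apply, hj, Pi.single_apply]
  -- z is quadratic in ξ
  have hzq : ∀ ξ : ℝ, z (Function.update x i ξ) = A * ξ ^ 2 + B * ξ + C := by
    intro ξ
    rw [hupd ξ, hz]
    have h1 : η ⬝ᵥ e = η i := by simp [he, dotProduct_single]
    have h2 : e ⬝ᵥ θ.mulVec x0 = θ.mulVec x0 i := by simp [he, single_dotProduct]
    have h3 : e ⬝ᵥ θ.mulVec e = θ i i := by
      simp [he, Matrix.mulVec_single, single_dotProduct]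
    have h4 : x0 ⬝ᵥ θ.mulVec e = θ.mulVec x0 i := by rw [hsym]; exact h2
    simp only [dotProduct_add, add_dotProduct, Matrix.mulVec_add, Matrix.mulVec_smul,
      dotProduct_smul, smul_dotProduct, smul_eq_mul, h1, h2, h3, h4, hAdef, hBdef, hCdef]
    ring
  -- φ1 evaluation
  set v : Fin n → ℝ := θ⁻¹.mulVec e with hv
  have hE : ∀ u : Fin n → ℝ, (Matrix.single i i (1:ℝ)).mulVec u = (u i) • e := by
    intro u; funext j
    simp [Matrix.mulVec, dotProduct, Matrix.single, he, Pi.single_apply,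
      ite_and, Finset.sum_ite_eq, mul_comm, eq_comm]
  have hφ : ∀ ξ : ℝ, φ1 i (Function.update x i ξ) = (A * ξ + B / 2) • v := by
    intro ξ
    rw [hφ1]
    rw [← Matrix.mulVec_mulVec, ← Matrix.mulVec_mulVec, hE, Matrix.mulVec_smul]
    congr 1
    rw [Matrix.mulVec_add, Matrix.mulVec_smul, Matrix.mulVec_mulVec, hθinv, Matrix.one_mulVec,
      hupd ξ, Matrix.mulVec_add, Matrix.mulVec_smul]
    simp only [Pi.add_apply, Pi.smul_apply, smul_eq_mul]
    have h5 : θ.mulVec e i = θ i i := by simp [he, Matrix.mulVec_single]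
    rw [h5, hAdef, hBdef]
    ring
  -- reduce to scalar integral
  have hform : ∀ ξ : ℝ,
      Real.exp (z (Function.update x i ξ) - z x) • φ1 i (Function.update x i ξ)
      = ((A * ξ + B / 2) * Real.exp (A * ξ ^ 2 + B * ξ + (C - z x))) • v := by
    intro ξ
    rw [hφ ξ, hzq ξ, smul_smul]
    ring_nf
  obtain ⟨hint, hval⟩ := quad_integral A B (C - z x) hA s
  constructor
  · simp only [hform]
    exact (hint.smul_const v)
  · simp only [hform]
    rw [integral_smul_const, hval, hzq s]
    have harg : A * s ^ 2 + B * s + (C - z x) = A * s ^ 2 + B * s + C - z x := by ring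
    rw [harg]
end

section
/- (Lemma: closed form of the second integral term for Gaussian families.) Let n ≥ 1, η ∈ ℝⁿ, and let θ be a symmetric negative definite real n×n matrix. For y ∈ ℝⁿ set z(y) := ηᵀy + yᵀθy, set ∇_θψ := θ⁻¹((1/4)ηηᵀθ⁻¹ − (1/2)I_n), and define φ_{2,i}(y) := θ⁻¹E_i ( θ(yyᵀ − ∇_θψ)θ − (1/2)θyηᵀ + (1/2)ηyᵀθ ) θ⁻¹. Then for every x ∈ ℝⁿ and every i ∈ {1,…,n}, the ℝ^{n×n}-valued function ξ ↦ φ_{2,i}(x^{i←ξ})·exp( z(x^{i←ξ}) − z(x) ) is Bochner integrable on (−∞, x_i], and ∫_{−∞}^{x_i} φ_{2,i}(x^{i←ξ})·exp( z(x^{i←ξ}) − z(x) ) dξ = (1/4)·θ⁻¹e_i·(2θx − η)ᵀ·θ⁻¹. -/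
section GaussianSecondIntegralHelpers
open Matrix MeasureTheory Filter

lemma tendsto_quadratic_atBot' (a b c : ℝ) (hb : b < 0) :
    Tendsto (fun ξ : ℝ => c + a * ξ + b * ξ ^ 2) atBot atBot := by
  have h2 : Tendsto (fun ξ : ℝ => b * ξ + a) atBot atTop :=
    tendsto_atTop_add_const_right _ a ((tendsto_const_mul_atTop_of_neg hb).mpr tendsto_id)
  have h3 : Tendsto (fun ξ : ℝ => ξ * (b * ξ + a)) atBot atBot :=
    Tendsto.atBot_mul_atTop₀ tendsto_id h2
  have h4 : Tendsto (fun ξ : ℝ => c + ξ * (b * ξ + a)) atBot atBot :=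
    tendsto_atBot_add_const_left _ c h3
  refine h4.congr (fun ξ => by ring)

lemma tendsto_mul_exp_atBot : Tendsto (fun ξ : ℝ => ξ * Real.exp ξ) atBot (nhds 0) := by
  have h := (Real.tendsto_pow_mul_exp_neg_atTop_nhds_zero 1).comp tendsto_neg_atBot_atTop
  have h2 : Tendsto (fun ξ : ℝ => -(ξ * Real.exp ξ)) atBot (nhds 0) := by
    refine h.congr (fun ξ => ?_)
    simp only [Function.comp, pow_one, neg_neg]
    ring
  simpa using h2.neg

lemma tendsto_affine_exp_quadratic' (p q a b c : ℝ) (hb : b < 0) :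
    Tendsto (fun ξ : ℝ => (p + q * ξ) * Real.exp (c + a * ξ + b * ξ ^ 2)) atBot (nhds 0) := by
  have h0 : Tendsto (fun ξ : ℝ => Real.exp (c + a * ξ + b * ξ ^ 2)) atBot (nhds 0) :=
    Real.tendsto_exp_atBot.comp (tendsto_quadratic_atBot' a b c hb)
  have h2 : Tendsto (fun ξ : ℝ => Real.exp (c + (a - 1) * ξ + b * ξ ^ 2)) atBot (nhds 0) :=
    Real.tendsto_exp_atBot.comp (tendsto_quadratic_atBot' (a - 1) b c hb)
  have key : ∀ ξ : ℝ, (p + q * ξ) * Real.exp (c + a * ξ + b * ξ ^ 2)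
      = p * Real.exp (c + a * ξ + b * ξ ^ 2)
        + q * ((ξ * Real.exp ξ) * Real.exp (c + (a - 1) * ξ + b * ξ ^ 2)) := by
    intro ξ
    rw [mul_assoc ξ, ← Real.exp_add]
    have : ξ + (c + (a - 1) * ξ + b * ξ ^ 2) = c + a * ξ + b * ξ ^ 2 := by ring
    rw [this]; ring
  have := ((h0.const_mul p).add ((tendsto_mul_exp_atBot.mul h2).const_mul q))
  simp only [mul_zero, zero_mul, add_zero] at this
  exact this.congr (fun ξ => (key ξ).symm)

lemma integrable_pow_mul_exp_quadratic (k : ℕ) (a b c : ℝ) (hb : b < 0) :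
    Integrable (fun ξ : ℝ => ξ ^ k * Real.exp (c + a * ξ + b * ξ ^ 2)) := by
  have hb0 : b ≠ 0 := hb.ne
  have hb' : (0:ℝ) < -b := by linarith
  have base : ∀ j : ℕ, Integrable (fun s : ℝ => s ^ j * Real.exp (b * s ^ 2)) := by
    intro j
    have h := integrable_rpow_mul_exp_neg_mul_sq hb' (s := (j : ℝ)) (lt_of_lt_of_le (by norm_num) (Nat.cast_nonneg j))
    have : (fun s : ℝ => s ^ (j : ℝ) * Real.exp (-(-b) * s ^ 2))
        = fun s : ℝ => s ^ j * Real.exp (b * s ^ 2) := by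
      funext s; rw [Real.rpow_natCast]; ring_nf
    rwa [this] at h
  set m : ℝ := -(a / (2 * b)) with hm
  have hshift : Integrable (fun s : ℝ => (s + m) ^ k * Real.exp (b * s ^ 2)) := by
    have heq : (fun s : ℝ => (s + m) ^ k * Real.exp (b * s ^ 2))
        = fun s : ℝ => ∑ j ∈ Finset.range (k + 1),
            (s ^ j * Real.exp (b * s ^ 2)) * (m ^ (k - j) * (k.choose j : ℝ)) := by
      funext s
      rw [add_pow, Finset.sum_mul]
      refine Finset.sum_congr rfl fun j _ => by ring
    rw [heq]
    exact integrable_finset_sum _ fun j _ => (base j).mul_const _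
  have htrans := hshift.comp_sub_right m
  have key : (fun ξ : ℝ => ξ ^ k * Real.exp (c + a * ξ + b * ξ ^ 2))
      = fun ξ : ℝ => ((ξ - m + m) ^ k * Real.exp (b * (ξ - m) ^ 2)) * Real.exp (c - b * m ^ 2) := by
    funext ξ
    rw [mul_assoc, ← Real.exp_add, sub_add_cancel]
    congr 2
    rw [hm]
    field_simp
    ring
  rw [key]
  exact htrans.mul_const _

lemma gaussian_halfline' (p q a b c0 xc : ℝ) (hb : b < 0) :
    IntegrableOn (fun ξ : ℝ => (q + (p + q * ξ) * (a + 2 * b * ξ)) *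
        Real.exp (c0 + a * ξ + b * ξ ^ 2)) (Set.Iic xc) ∧
      ∫ ξ in Set.Iic xc, (q + (p + q * ξ) * (a + 2 * b * ξ)) * Real.exp (c0 + a * ξ + b * ξ ^ 2)
        = (p + q * xc) * Real.exp (c0 + a * xc + b * xc ^ 2) := by
  have hint : Integrable (fun ξ : ℝ => (q + (p + q * ξ) * (a + 2 * b * ξ)) *
      Real.exp (c0 + a * ξ + b * ξ ^ 2)) := by
    have h0 := integrable_pow_mul_exp_quadratic 0 a b c0 hb
    have h1 := integrable_pow_mul_exp_quadratic 1 a b c0 hb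
    have h2 := integrable_pow_mul_exp_quadratic 2 a b c0 hb
    have heq : (fun ξ : ℝ => (q + (p + q * ξ) * (a + 2 * b * ξ)) *
        Real.exp (c0 + a * ξ + b * ξ ^ 2))
        = fun ξ : ℝ => (q + p * a) * (ξ ^ 0 * Real.exp (c0 + a * ξ + b * ξ ^ 2))
            + (q * a + 2 * b * p) * (ξ ^ 1 * Real.exp (c0 + a * ξ + b * ξ ^ 2))
            + (2 * b * q) * (ξ ^ 2 * Real.exp (c0 + a * ξ + b * ξ ^ 2)) := by
      funext ξ; ring
    rw [heq]
    exact ((h0.const_mul _).add (h1.const_mul _)).add (h2.const_mul _)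
  refine ⟨hint.integrableOn, ?_⟩
  have hderiv : ∀ ξ : ℝ, HasDerivAt (fun t : ℝ => (p + q * t) * Real.exp (c0 + a * t + b * t ^ 2))
      ((q + (p + q * ξ) * (a + 2 * b * ξ)) * Real.exp (c0 + a * ξ + b * ξ ^ 2)) ξ := by
    intro ξ
    have h1 : HasDerivAt (fun t : ℝ => p + q * t) q ξ := by
      simpa using ((hasDerivAt_id ξ).const_mul q).const_add p
    have hE : HasDerivAt (fun t : ℝ => c0 + a * t + b * t ^ 2) (a + 2 * b * ξ) ξ := by
      have ha : HasDerivAt (fun t : ℝ => c0 + a * t) a ξ := by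
        simpa using ((hasDerivAt_id ξ).const_mul a).const_add c0
      have hb2 : HasDerivAt (fun t : ℝ => b * t ^ 2) (2 * b * ξ) ξ := by
        have := (hasDerivAt_pow 2 ξ).const_mul b
        exact this.congr_deriv (by push_cast; ring)
      exact ha.add hb2
    have := h1.mul hE.exp
    exact this.congr_deriv (by ring)
  rw [integral_Iic_of_hasDerivAt_of_tendsto' (fun ξ _ => hderiv ξ) hint.integrableOn
    (tendsto_affine_exp_quadratic' p q a b c0 hb)]
  simp

lemma vecMul_vecMulVec' {n : ℕ} (v a b : Fin n → ℝ) :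
    v ᵥ* vecMulVec a b = (v ⬝ᵥ a) • b := by
  funext l
  simp only [Matrix.vecMul, dotProduct, Matrix.vecMulVec_apply, Pi.smul_apply,
    smul_eq_mul, Finset.sum_mul]
  exact Finset.sum_congr rfl fun k _ => by ring

lemma vecMul_smul_matrix {n : ℕ} (s : ℝ) (v : Fin n → ℝ) (M : Matrix (Fin n) (Fin n) ℝ) :
    v ᵥ* (s • M) = s • (v ᵥ* M) := by
  funext l
  simp only [Matrix.vecMul, dotProduct, Matrix.smul_apply, Pi.smul_apply, smul_eq_mul,
    Finset.mul_sum]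
  exact Finset.sum_congr rfl fun k _ => by ring

lemma invE_mul {n : ℕ} (A M : Matrix (Fin n) (Fin n) ℝ) (i : Fin n) :
    A * Matrix.single i i 1 * M
      = vecMulVec (A *ᵥ Pi.single i 1) ((Pi.single i 1 : Fin n → ℝ) ᵥ* M) := by
  ext k l
  simp [Matrix.mul_apply, Matrix.single, Matrix.vecMulVec_apply, Matrix.mulVec,
    Matrix.vecMul, dotProduct, Pi.single_apply, ite_and, mul_ite, ite_mul,
    Finset.sum_ite_eq, Finset.sum_mul, Finset.mul_sum]

end GaussianSecondIntegralHelpers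

open Matrix MeasureTheory

/-- Appendix C, closed form of the second integral term for Gaussian families: with
`z(y) = ηᵀy + yᵀθy`, `∇_θψ = θ⁻¹((1/4)ηηᵀθ⁻¹ − (1/2)I)` and
`φ_{2,i}(y) = θ⁻¹E_i(θ(yyᵀ − ∇_θψ)θ − (1/2)θyηᵀ + (1/2)ηyᵀθ)θ⁻¹`, the matrix-valued map
`ξ ↦ φ_{2,i}(x^{i←ξ}) exp(z(x^{i←ξ}) − z(x))` is (entrywise Bochner) integrable on
`(−∞, x_i]` and its integral equals `(1/4)θ⁻¹e_i(2θx − η)ᵀθ⁻¹`. -/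
theorem gaussian_second_integral_term {n : ℕ} (hn : 1 ≤ n)
    (η : Fin n → ℝ) (θ : Matrix (Fin n) (Fin n) ℝ)
    (hθsymm : θ.IsSymm) (hθneg : (-θ).PosDef)
    (z : (Fin n → ℝ) → ℝ) (hz : ∀ y, z y = η ⬝ᵥ y + y ⬝ᵥ θ.mulVec y)
    (gθ : Matrix (Fin n) (Fin n) ℝ)
    (hgθ : gθ = θ⁻¹ * ((1 / 4 : ℝ) • (vecMulVec η η * θ⁻¹) - (1 / 2 : ℝ) • 1))
    (φ2 : Fin n → (Fin n → ℝ) → Matrix (Fin n) (Fin n) ℝ)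
    (hφ2 : ∀ i y, φ2 i y =
      θ⁻¹ * Matrix.single i i 1 *
        (θ * (vecMulVec y y - gθ) * θ
          - (1 / 2 : ℝ) • (θ * vecMulVec y η) + (1 / 2 : ℝ) • (vecMulVec η y * θ)) * θ⁻¹)
    (x : Fin n → ℝ) (i : Fin n) :
    (∀ i' j' : Fin n,
      IntegrableOn
        (fun ξ : ℝ =>
          φ2 i (Function.update x i ξ) i' j' * Real.exp (z (Function.update x i ξ) - z x))
        (Set.Iic (x i))) ∧
    (∀ i' j' : Fin n,
      (∫ ξ in Set.Iic (x i),
          φ2 i (Function.update x i ξ) i' j' * Real.exp (z (Function.update x i ξ) - z x))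
        = ((1 / 4 : ℝ) •
            vecMulVec (θ⁻¹.mulVec (Pi.single i 1))
              (vecMul ((2 : ℝ) • θ.mulVec x - η) θ⁻¹)) i' j') := by
  classical
  -- determinant and inverse facts
  have hdetneg : (0:ℝ) < (-θ).det := hθneg.det_pos
  have hdet : IsUnit θ.det := by
    refine isUnit_iff_ne_zero.mpr fun h => ?_
    rw [Matrix.det_neg, h, mul_zero] at hdetneg
    exact lt_irrefl 0 hdetneg
  have hθA : θ * θ⁻¹ = 1 := Matrix.mul_nonsing_inv θ hdet
  have hAθ : θ⁻¹ * θ = 1 := Matrix.nonsing_inv_mul θ hdet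
  have hsymm : θᵀ = θ := hθsymm
  -- negativity of the diagonal entry
  have hbb : θ i i < 0 := by
    have hd0 : (Pi.single i 1 : Fin n → ℝ) ≠ 0 := by
      intro h
      have := congrFun h i
      simp at this
    have hpos := hθneg.dotProduct_mulVec_pos hd0
    simp only [star_trivial, Matrix.neg_mulVec, Matrix.mulVec_single_one, Matrix.col_apply, mul_one,
      single_dotProduct, one_mul, Pi.neg_apply, Matrix.neg_apply] at hpos
    linarith
  -- symmetric matrix vector facts
  have hm2 : ∀ v : Fin n → ℝ, v ᵥ* θ = θ *ᵥ v := by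
    intro v
    conv_lhs => rw [← hsymm]
    exact Matrix.vecMul_transpose θ v
  have hm1 : ∀ v : Fin n → ℝ, (θ *ᵥ v) ᵥ* θ⁻¹ = v := by
    intro v
    rw [Matrix.vecMul_mulVec, hsymm, hθA, Matrix.vecMul_one]
  have hrowθ : (θ i) ᵥ* θ⁻¹ = (Pi.single i 1 : Fin n → ℝ) := by
    show θ.row i ᵥ* θ⁻¹ = _
    rw [← Matrix.single_one_vecMul i θ, Matrix.vecMul_vecMul, hθA, Matrix.vecMul_one]
  -- the θ g θ computation
  have hθgθθ : θ * gθ * θ = (1/4 : ℝ) • vecMulVec η η - (1/2 : ℝ) • θ := by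
    rw [hgθ, ← Matrix.mul_assoc, hθA, Matrix.one_mul, Matrix.sub_mul, Matrix.smul_mul,
      Matrix.smul_mul, Matrix.mul_assoc, hAθ, Matrix.mul_one, Matrix.one_mul]
  have hmid : ∀ y : Fin n → ℝ, θ * (vecMulVec y y - gθ) * θ
      = θ * vecMulVec y y * θ - ((1/4 : ℝ) • vecMulVec η η - (1/2 : ℝ) • θ) := by
    intro y
    rw [Matrix.mul_sub, Matrix.sub_mul, hθgθθ]
  -- the row identity
  have hrow : ∀ y : Fin n → ℝ, (Pi.single i 1 : Fin n → ℝ) ᵥ*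
      ((θ * (vecMulVec y y - gθ) * θ - (1/2 : ℝ) • (θ * vecMulVec y η)
        + (1/2 : ℝ) • (vecMulVec η y * θ)) * θ⁻¹)
      = ((θ *ᵥ y) i) • y
        - (((1/4 : ℝ) * η i) • (η ᵥ* θ⁻¹) - (1/2 : ℝ) • (Pi.single i 1 : Fin n → ℝ))
        - (((1/2 : ℝ) * (θ *ᵥ y) i) • (η ᵥ* θ⁻¹)) + (((1/2 : ℝ) * η i) • y) := by
    intro y
    have p1 : (Pi.single i 1 : Fin n → ℝ) ᵥ* (θ * vecMulVec y y * θ)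
        = ((θ *ᵥ y) i) • (θ *ᵥ y) := by
      rw [← Matrix.vecMul_vecMul, ← Matrix.vecMul_vecMul, Matrix.single_one_vecMul,
        vecMul_vecMulVec', Matrix.smul_vecMul, hm2]
      rfl
    have p2a : (Pi.single i 1 : Fin n → ℝ) ᵥ* vecMulVec η η = (η i) • η := by
      rw [vecMul_vecMulVec', single_dotProduct, one_mul]
    have p2b : (Pi.single i 1 : Fin n → ℝ) ᵥ* θ = θ i := Matrix.single_one_vecMul i θ
    have p3 : (Pi.single i 1 : Fin n → ℝ) ᵥ* (θ * vecMulVec y η) = ((θ *ᵥ y) i) • η := by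
      rw [← Matrix.vecMul_vecMul, Matrix.single_one_vecMul, vecMul_vecMulVec']
      rfl
    have p4 : (Pi.single i 1 : Fin n → ℝ) ᵥ* (vecMulVec η y * θ) = (η i) • (θ *ᵥ y) := by
      rw [← Matrix.vecMul_vecMul, vecMul_vecMulVec', single_dotProduct, one_mul,
        Matrix.smul_vecMul, hm2]
    rw [← Matrix.vecMul_vecMul, hmid y]
    simp only [Matrix.vecMul_add, Matrix.vecMul_sub, vecMul_smul_matrix, p1, p2a, p2b, p3, p4]
    simp only [Matrix.sub_vecMul, Matrix.add_vecMul, Matrix.smul_vecMul, hm1, hrowθ]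
    funext l
    simp only [Pi.add_apply, Pi.sub_apply, Pi.smul_apply, smul_eq_mul]
    ring
  -- the key pointwise identity for entries of φ2
  have key : ∀ (y : Fin n → ℝ) (i' j' : Fin n), φ2 i y i' j'
      = (θ⁻¹ i' i) * ( ((θ *ᵥ y) i) * y j'
        - ((1/4 : ℝ) * η i) * (η ᵥ* θ⁻¹) j' + (1/2 : ℝ) * (Pi.single i 1 : Fin n → ℝ) j'
        - ((1/2 : ℝ) * (θ *ᵥ y) i) * (η ᵥ* θ⁻¹) j' + ((1/2 : ℝ) * η i) * y j') := by
    intro y i' j'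
    rw [hφ2, Matrix.mul_assoc (θ⁻¹ * Matrix.single i i 1), invE_mul, hrow y]
    simp only [Matrix.vecMulVec_apply, Matrix.mulVec_single_one, Matrix.col_apply, mul_one, Pi.add_apply,
      Pi.sub_apply, Pi.smul_apply, smul_eq_mul]
    ring
  -- decomposition of the update
  have hupd : ∀ ξ : ℝ, Function.update x i ξ
      = Function.update x i 0 + ξ • (Pi.single i 1 : Fin n → ℝ) := by
    intro ξ
    funext k
    by_cases hk : k = i
    · subst hk; simp
    · simp [Function.update_apply, Pi.single_apply, hk]
  -- expansion of z along the update
  have hzexp : ∀ ξ : ℝ, z (Function.update x i ξ)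
      = z (Function.update x i 0)
        + (η i + 2 * (θ *ᵥ Function.update x i 0) i) * ξ + θ i i * ξ ^ 2 := by
    intro ξ
    have esym : (Function.update x i 0) ⬝ᵥ (θ *ᵥ (Pi.single i 1 : Fin n → ℝ))
        = (θ *ᵥ Function.update x i 0) i := by
      rw [Matrix.dotProduct_mulVec, hm2]
      simp
    rw [hupd ξ, hz, hz]
    simp only [Matrix.mulVec_add, Matrix.mulVec_smul, dotProduct_add,
      add_dotProduct, dotProduct_smul, smul_dotProduct, smul_eq_mul]
    rw [esym]
    simp only [dotProduct_single, single_dotProduct, Matrix.mulVec_single_one, Matrix.col_apply,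
      mul_one, one_mul]
    ring
  have hB : ∀ ξ : ℝ, z (Function.update x i ξ) - z x
      = (z (Function.update x i 0) - z x)
        + (η i + 2 * (θ *ᵥ Function.update x i 0) i) * ξ + θ i i * ξ ^ 2 := by
    intro ξ
    rw [hzexp ξ]
    ring
  have hzero : (z (Function.update x i 0) - z x)
      + (η i + 2 * (θ *ᵥ Function.update x i 0) i) * (x i) + θ i i * (x i) ^ 2 = 0 := by
    have h := hB (x i)
    rw [Function.update_eq_self] at h
    linarith
  -- per-entry proof
  have main : ∀ i' j' : Fin n,
      IntegrableOn (fun ξ : ℝ => φ2 i (Function.update x i ξ) i' j' *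
          Real.exp (z (Function.update x i ξ) - z x)) (Set.Iic (x i)) ∧
        (∫ ξ in Set.Iic (x i), φ2 i (Function.update x i ξ) i' j' *
            Real.exp (z (Function.update x i ξ) - z x))
          = ((1 / 4 : ℝ) •
              vecMulVec (θ⁻¹.mulVec (Pi.single i 1))
                (vecMul ((2 : ℝ) • θ.mulVec x - η) θ⁻¹)) i' j' := by
    intro i' j'
    -- scalar abbreviations (inline)
    have hC : ∀ ξ : ℝ, φ2 i (Function.update x i ξ) i' j'
        = ((1/2 : ℝ) * (θ⁻¹ i' i * (Pi.single i 1 : Fin n → ℝ) j'))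
          + (((1/4 : ℝ) * (θ⁻¹ i' i *
                (2 * Function.update x i 0 j' - (η ᵥ* θ⁻¹) j')))
              + ((1/2 : ℝ) * (θ⁻¹ i' i * (Pi.single i 1 : Fin n → ℝ) j')) * ξ)
            * ((η i + 2 * (θ *ᵥ Function.update x i 0) i) + 2 * θ i i * ξ) := by
      intro ξ
      rw [key (Function.update x i ξ) i' j', hupd ξ]
      simp only [Matrix.mulVec_add, Matrix.mulVec_smul, Pi.add_apply, Pi.smul_apply,
        smul_eq_mul, Matrix.mulVec_single_one, Matrix.col_apply, mul_one]
      ring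
    have hfun : (fun ξ : ℝ => φ2 i (Function.update x i ξ) i' j' *
        Real.exp (z (Function.update x i ξ) - z x))
        = fun ξ : ℝ => (((1/2 : ℝ) * (θ⁻¹ i' i * (Pi.single i 1 : Fin n → ℝ) j'))
            + (((1/4 : ℝ) * (θ⁻¹ i' i *
                  (2 * Function.update x i 0 j' - (η ᵥ* θ⁻¹) j')))
                + ((1/2 : ℝ) * (θ⁻¹ i' i * (Pi.single i 1 : Fin n → ℝ) j')) * ξ)
              * ((η i + 2 * (θ *ᵥ Function.update x i 0) i) + 2 * θ i i * ξ))
            * Real.exp ((z (Function.update x i 0) - z x)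
              + (η i + 2 * (θ *ᵥ Function.update x i 0) i) * ξ + θ i i * ξ ^ 2) := by
      funext ξ
      rw [hC ξ, hB ξ]
    obtain ⟨hint, hval⟩ := gaussian_halfline'
      ((1/4 : ℝ) * (θ⁻¹ i' i * (2 * Function.update x i 0 j' - (η ᵥ* θ⁻¹) j')))
      ((1/2 : ℝ) * (θ⁻¹ i' i * (Pi.single i 1 : Fin n → ℝ) j'))
      (η i + 2 * (θ *ᵥ Function.update x i 0) i) (θ i i)
      (z (Function.update x i 0) - z x) (x i) hbb
    have htar : ((1 / 4 : ℝ) •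
        vecMulVec (θ⁻¹.mulVec (Pi.single i 1))
          (vecMul ((2 : ℝ) • θ.mulVec x - η) θ⁻¹)) i' j'
        = ((1/4 : ℝ) * (θ⁻¹ i' i * (2 * Function.update x i 0 j' - (η ᵥ* θ⁻¹) j')))
          + ((1/2 : ℝ) * (θ⁻¹ i' i * (Pi.single i 1 : Fin n → ℝ) j')) * x i := by
      have h2 : (((2:ℝ) • (θ *ᵥ x) - η) ᵥ* θ⁻¹) = (2:ℝ) • x - η ᵥ* θ⁻¹ := by
        rw [Matrix.sub_vecMul, Matrix.smul_vecMul, hm1]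
      have hxj : x j' = Function.update x i 0 j' + x i * (Pi.single i 1 : Fin n → ℝ) j' := by
        have := congrFun (hupd (x i)) j'
        rw [Function.update_eq_self] at this
        simpa using this
      simp only [Matrix.smul_apply, Matrix.vecMulVec_apply, h2,
        Pi.sub_apply, Pi.smul_apply, smul_eq_mul]
      rw [show (θ⁻¹ *ᵥ Pi.single i 1 : Fin n → ℝ) i' = θ⁻¹ i' i by simp]
      rw [hxj]
      ring
    constructor
    · rw [hfun]; exact hint
    · rw [hfun, hval, hzero, Real.exp_zero, mul_one, htar]
  exact ⟨fun i' j' => (main i' j').1, fun i' j' => (main i' j').2⟩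
end

section
/- (Proposition 5 combined with Theorem 4: Gaussian-mixture Fokker–Planck drift in closed form.) Let n, k ≥ 1 and ν ∈ Δ_k. Let a : ℝⁿ → ℝ^{n×n} be twice continuously differentiable. For each ℓ = 1,…,k let η^ℓ : ℝ → ℝⁿ and θ^ℓ : ℝ → ℝ^{n×n} with θ^ℓ_t symmetric negative definite for all t, and assume both are differentiable at t₀ with derivatives η̇^ℓ, θ̇^ℓ. Define ψ(η,θ) := −(1/4)ηᵀθ⁻¹η + (1/2)·log det(−(1/2)θ⁻¹) + (n/2)·log(2π), set p_ℓ(y,t) := exp( (η^ℓ_t)ᵀy + yᵀθ^ℓ_t y − ψ(η^ℓ_t, θ^ℓ_t) ) and p(y,t) := ∑_{ℓ=1}^k ν_ℓ p_ℓ(y,t). Define the drift u(y) := (1/2)·div a(y) + (1/p(y,t₀))·∑_{ℓ=1}^k ν_ℓ p_ℓ(y,t₀)·[ (1/4)(θ^ℓ)⁻¹θ̇^ℓ(θ^ℓ)⁻¹η^ℓ − (1/2)(θ^ℓ)⁻¹η̇^ℓ − (1/2)(θ^ℓ)⁻¹θ̇^ℓ y + a(y)( (1/2)η^ℓ + θ^ℓ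 y ) ], with all parameters evaluated at t₀. Then for every x ∈ ℝⁿ, p satisfies the Kolmogorov forward equation at (x,t₀): ∂_t p(x,t₀) = −∑_{i=1}^n ∂_{x_i}( u_i · p(·,t₀) )(x) + (1/2)·∑_{i,j=1}^n ∂_{x_i}∂_{x_j}( a_{ij} · p(·,t₀) )(x). -/
open Matrix MeasureTheory

section FPHelpers
open Matrix

variable {n N : ℕ}

lemma hasDerivAt_update_coord (y : Fin n → ℝ) (i m : Fin n) (ξ₀ : ℝ) :
    HasDerivAt (fun ξ : ℝ => Function.update y i ξ m) (if m = i then 1 else 0) ξ₀ := by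
  by_cases hm : m = i
  · subst hm
    simp only [Function.update_self, if_pos rfl]
    exact hasDerivAt_id ξ₀
  · simp only [Function.update_of_ne hm, if_neg hm]; exact hasDerivAt_const _ _

lemma hasDerivAt_slice_dot (v y : Fin n → ℝ) (i : Fin n) :
    HasDerivAt (fun ξ => v ⬝ᵥ Function.update y i ξ) (v i) (y i) := by
  have : ∀ ξ : ℝ, v ⬝ᵥ Function.update y i ξ = ∑ m, v m * Function.update y i ξ m := fun _ => rfl
  simp_rw [this]
  have h : HasDerivAt (fun ξ : ℝ => ∑ m, v m * Function.update y i ξ m)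
      (∑ m, v m * (if m = i then 1 else 0)) (y i) := by
    apply HasDerivAt.fun_sum
    intro m _
    exact (hasDerivAt_update_coord y i m (y i)).const_mul (v m)
  simpa [mul_ite, Finset.sum_ite_eq'] using h

lemma hasDerivAt_slice_quad (T : Matrix (Fin n) (Fin n) ℝ) (y : Fin n → ℝ) (i : Fin n) :
    HasDerivAt (fun ξ => Function.update y i ξ ⬝ᵥ T.mulVec (Function.update y i ξ))
      (T.mulVec y i + Tᵀ.mulVec y i) (y i) := by
  have key : ∀ ξ : ℝ, Function.update y i ξ ⬝ᵥ T.mulVec (Function.update y i ξ)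
      = ∑ m, ∑ r, Function.update y i ξ m * (T m r * Function.update y i ξ r) := by
    intro ξ
    simp only [dotProduct, Matrix.mulVec, Finset.mul_sum]
  simp_rw [key]
  have h : HasDerivAt
      (fun ξ : ℝ => ∑ m, ∑ r, Function.update y i ξ m * (T m r * Function.update y i ξ r))
      (∑ m, ∑ r, ((if m = i then 1 else 0) * (T m r * y r)
        + y m * (T m r * (if r = i then 1 else 0)))) (y i) := by
    apply HasDerivAt.fun_sum; intro m _
    apply HasDerivAt.fun_sum; intro r _
    have h1 := hasDerivAt_update_coord y i m (y i)
    have h2 := (hasDerivAt_update_coord y i r (y i)).const_mul (T m r)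
    have := h1.fun_mul h2
    simp only [Function.update_eq_self] at this
    exact this
  convert h using 1
  simp only [Finset.sum_add_distrib]
  congr 1
  · rw [Finset.sum_comm]
    simp [ite_mul, Finset.sum_ite_eq', Matrix.mulVec, dotProduct]
  · simp [mul_ite, Finset.sum_ite_eq', Matrix.mulVec, dotProduct, Matrix.transpose_apply,
      mul_comm, mul_left_comm]

lemma HasFDerivAt.slice' {F : (Fin n → ℝ) → ℝ} {L : (Fin n → ℝ) →L[ℝ] ℝ} {y : Fin n → ℝ}
    (h : HasFDerivAt F L y) (i : Fin n) :
    HasDerivAt (fun ξ => F (Function.update y i ξ)) (L (Pi.single i 1)) (y i) := by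
  have h' : HasFDerivAt F L (Function.update y i (y i)) := by
    rwa [Function.update_eq_self]
  exact h'.comp_hasDerivAt (y i) (hasDerivAt_update y i (y i))

lemma DifferentiableAt.slice' {F : (Fin n → ℝ) → ℝ} {y : Fin n → ℝ}
    (h : DifferentiableAt ℝ F y) (i : Fin n) :
    DifferentiableAt ℝ (fun ξ => F (Function.update y i ξ)) (y i) :=
  (h.hasFDerivAt.slice' i).differentiableAt

lemma hasDerivAt_slice_gauss (e : Fin n → ℝ) (T : Matrix (Fin n) (Fin n) ℝ) (c : ℝ)
    (hTs : Tᵀ = T) (y : Fin n → ℝ) (i : Fin n) :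
    HasDerivAt (fun ξ => Real.exp (e ⬝ᵥ Function.update y i ξ
        + Function.update y i ξ ⬝ᵥ T.mulVec (Function.update y i ξ) - c))
      (Real.exp (e ⬝ᵥ y + y ⬝ᵥ T.mulVec y - c) * (e i + 2 * T.mulVec y i)) (y i) := by
  have h := (((hasDerivAt_slice_dot e y i).fun_add (hasDerivAt_slice_quad T y i)).sub_const c).exp
  rw [Function.update_eq_self] at h
  convert h using 2
  rw [hTs]
  ring

lemma cramer_eq_sum_adjugate (A : Matrix (Fin N) (Fin N) ℝ) (c : Fin N → ℝ) (i : Fin N) :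
    cramer A c i = ∑ m, c m * adjugate A i m := by
  have hsingle : ∀ m : Fin N, (Pi.single m (c m) : Fin N → ℝ)
      = c m • (Pi.single m (1:ℝ) : Fin N → ℝ) := by
    intro m; ext r; by_cases h : r = m
    · subst h; simp
    · simp [Pi.single_eq_of_ne h]
  have key : ∀ m : Fin N, cramer A (Pi.single m (1:ℝ)) i = adjugate A i m := by
    intro m
    rw [cramer_apply, ← det_transpose (A.updateCol i (Pi.single m 1)),
      ← updateRow_transpose, ← adjugate_apply]
    rw [show Aᵀ.adjugate = A.adjugateᵀ from (adjugate_transpose A).symm]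
    rfl
  have hc : c = ∑ m, Pi.single m (c m) := (Finset.univ_sum_single c).symm
  conv_lhs => rw [hc]
  rw [map_sum]
  simp only [Finset.sum_apply]
  refine Finset.sum_congr rfl fun m _ => ?_
  rw [hsingle m, LinearMap.map_smul]
  simp [key m]

lemma hasDerivAt_det_path {M : ℝ → Matrix (Fin N) (Fin N) ℝ} {M' : Matrix (Fin N) (Fin N) ℝ}
    {t₀ : ℝ} (h : ∀ i j, HasDerivAt (fun t => M t i j) (M' i j) t₀) :
    HasDerivAt (fun t => (M t).det) ((adjugate (M t₀) * M').trace) t₀ := by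
  have hdet : ∀ t, (M t).det = ∑ σ : Equiv.Perm (Fin N),
      (Equiv.Perm.sign σ : ℤ) * ∏ i, M t (σ i) i := by
    intro t; rw [Matrix.det_apply']
  simp_rw [hdet]
  have hmain : HasDerivAt (fun t => ∑ σ : Equiv.Perm (Fin N),
      (Equiv.Perm.sign σ : ℤ) * ∏ i, M t (σ i) i)
      (∑ σ : Equiv.Perm (Fin N), (Equiv.Perm.sign σ : ℤ) *
        ∑ i, (∏ j ∈ Finset.univ.erase i, M t₀ (σ j) j) • M' (σ i) i) t₀ := by
    apply HasDerivAt.fun_sum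
    intro σ _
    exact (HasDerivAt.fun_finsetProd (fun i _ => h (σ i) i)).const_mul _
  convert hmain using 1
  have step1 : ∀ i : Fin N, ((M t₀).updateCol i (fun m => M' m i)).det
      = ∑ σ : Equiv.Perm (Fin N), (Equiv.Perm.sign σ : ℤ) *
          (M' (σ i) i * ∏ j ∈ Finset.univ.erase i, M t₀ (σ j) j) := by
    intro i
    rw [Matrix.det_apply']
    refine Finset.sum_congr rfl fun σ _ => ?_
    congr 1
    rw [← Finset.mul_prod_erase Finset.univ _ (Finset.mem_univ i)]
    rw [Matrix.updateCol_self]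
    congr 1
    refine Finset.prod_congr rfl fun j hj => ?_
    rw [Matrix.updateCol_ne (Finset.ne_of_mem_erase hj)]
  have step2 : (adjugate (M t₀) * M').trace
      = ∑ i, ((M t₀).updateCol i (fun m => M' m i)).det := by
    have h3 : ∀ i : Fin N, ((M t₀).updateCol i (fun m => M' m i)).det
        = cramer (M t₀) (fun m => M' m i) i := fun i => (cramer_apply _ _ _).symm
    simp_rw [h3, cramer_eq_sum_adjugate]
    rw [Matrix.trace]
    refine Finset.sum_congr rfl fun i _ => ?_
    rw [Matrix.diag_apply, Matrix.mul_apply]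
    exact Finset.sum_congr rfl fun m _ => mul_comm _ _
  rw [step2]
  simp_rw [step1]
  rw [Finset.sum_comm]
  refine Finset.sum_congr rfl fun σ _ => ?_
  rw [← Finset.mul_sum]
  congr 1
  refine Finset.sum_congr rfl fun i _ => ?_
  rw [smul_eq_mul]; ring

lemma hasDerivAt_inv_path {θ : ℝ → Matrix (Fin N) (Fin N) ℝ} {θ' : Matrix (Fin N) (Fin N) ℝ}
    {t₀ : ℝ} (hent : ∀ i j, HasDerivAt (fun t => θ t i j) (θ' i j) t₀)
    (hinv : ∀ t, IsUnit (θ t).det) :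
    ∀ i j, HasDerivAt (fun t => (θ t)⁻¹ i j)
      ((-((θ t₀)⁻¹ * θ' * (θ t₀)⁻¹)) i j) t₀ := by
  have hadj : ∀ i j, DifferentiableAt ℝ (fun t => adjugate (θ t) i j) t₀ := by
    intro i j
    have heq : (fun t => adjugate (θ t) i j)
        = fun t => ((θ t).updateRow j (Pi.single i 1)).det := by
      funext t; rw [adjugate_apply]
    rw [heq]
    refine (hasDerivAt_det_path (M' := updateRow θ' j 0) ?_).differentiableAt
    intro m r
    by_cases hm : m = j
    · subst hm
      simp only [Matrix.updateRow_self]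
      exact hasDerivAt_const _ _
    · simp only [Matrix.updateRow_ne hm]
      exact hent m r
  have hdet : HasDerivAt (fun t => (θ t).det) ((adjugate (θ t₀) * θ').trace) t₀ :=
    hasDerivAt_det_path hent
  have hdetinv : DifferentiableAt ℝ (fun t => ((θ t).det)⁻¹) t₀ :=
    (hdet.differentiableAt.inv (hinv t₀).ne_zero)
  have hB : ∀ i j, DifferentiableAt ℝ (fun t => (θ t)⁻¹ i j) t₀ := by
    intro i j
    have heq : (fun t => (θ t)⁻¹ i j) = fun t => ((θ t).det)⁻¹ * adjugate (θ t) i j := by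
      funext t
      rw [Matrix.inv_def, Matrix.smul_apply, Ring.inverse_eq_inv', smul_eq_mul]
    rw [heq]
    exact hdetinv.mul (hadj i j)
  set B' : Matrix (Fin N) (Fin N) ℝ := Matrix.of fun i j => deriv (fun t => (θ t)⁻¹ i j) t₀
    with hB'def
  have hB' : ∀ i j, HasDerivAt (fun t => (θ t)⁻¹ i j) (B' i j) t₀ := fun i j =>
    (hB i j).hasDerivAt
  have hid : ∀ t, θ t * (θ t)⁻¹ = 1 := fun t => mul_nonsing_inv _ (hinv t)
  have hzero : ∀ i j, (θ' * (θ t₀)⁻¹) i j + (θ t₀ * B') i j = 0 := by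
    intro i j
    have h1 : HasDerivAt (fun t => ∑ m, θ t i m * (θ t)⁻¹ m j)
        (∑ m, (θ' i m * (θ t₀)⁻¹ m j + θ t₀ i m * B' m j)) t₀ :=
      HasDerivAt.fun_sum fun m _ => (hent i m).mul (hB' m j)
    have h2 : (fun t => ∑ m, θ t i m * (θ t)⁻¹ m j)
        = fun _ => (1 : Matrix (Fin N) (Fin N) ℝ) i j := by
      funext t; rw [← Matrix.mul_apply, hid t]
    rw [h2] at h1
    have h0 := h1.unique (hasDerivAt_const _ _)
    rw [Matrix.mul_apply, Matrix.mul_apply, ← Finset.sum_add_distrib]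
    exact h0
  have hmat : θ t₀ * B' = -(θ' * (θ t₀)⁻¹) := by
    ext i j
    have := hzero i j
    simp only [Matrix.neg_apply]
    linarith
  have hform : B' = -((θ t₀)⁻¹ * θ' * (θ t₀)⁻¹) := by
    calc B' = ((θ t₀)⁻¹ * θ t₀) * B' := by rw [nonsing_inv_mul _ (hinv t₀), one_mul]
    _ = (θ t₀)⁻¹ * (θ t₀ * B') := by rw [mul_assoc]
    _ = (θ t₀)⁻¹ * -(θ' * (θ t₀)⁻¹) := by rw [hmat]
    _ = -((θ t₀)⁻¹ * θ' * (θ t₀)⁻¹) := by rw [mul_neg, mul_assoc]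
  intro i j
  rw [← hform]
  exact hB' i j

lemma trace_adj_div_det (T θd : Matrix (Fin N) (Fin N) ℝ) (h : IsUnit T.det) :
    (adjugate T * θd).trace / T.det = (T⁻¹ * θd).trace := by
  have hadj : adjugate T = T.det • T⁻¹ := by
    rw [Matrix.inv_def]
    rw [smul_smul]
    rw [Ring.inverse_eq_inv']
    rw [mul_inv_cancel₀ h.ne_zero, one_smul]
  rw [hadj, Matrix.smul_mul, Matrix.trace_smul, smul_eq_mul,
    mul_comm, mul_div_assoc, div_self h.ne_zero, mul_one]

lemma hasDerivAt_time_component {n : ℕ} (η : ℝ → Fin n → ℝ)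
    (θ : ℝ → Matrix (Fin n) (Fin n) ℝ) (ηd : Fin n → ℝ) (θd : Matrix (Fin n) (Fin n) ℝ)
    (t₀ C : ℝ) (x : Fin n → ℝ)
    (hη : ∀ m, HasDerivAt (fun t => η t m) (ηd m) t₀)
    (hθ : ∀ i j, HasDerivAt (fun t => θ t i j) (θd i j) t₀)
    (hdet : ∀ t, IsUnit (θ t).det) :
    HasDerivAt (fun t => Real.exp (η t ⬝ᵥ x + x ⬝ᵥ (θ t).mulVec x
        - (-(1 / 4 : ℝ) * (η t ⬝ᵥ ((θ t)⁻¹).mulVec (η t))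
          + (1 / 2 : ℝ) * Real.log (((-(1 / 2) : ℝ) • (θ t)⁻¹).det) + C)))
      (Real.exp (η t₀ ⬝ᵥ x + x ⬝ᵥ (θ t₀).mulVec x
        - (-(1 / 4 : ℝ) * (η t₀ ⬝ᵥ ((θ t₀)⁻¹).mulVec (η t₀))
          + (1 / 2 : ℝ) * Real.log (((-(1 / 2) : ℝ) • (θ t₀)⁻¹).det) + C))
       * (ηd ⬝ᵥ x + x ⬝ᵥ θd.mulVec x
          - (-(1 / 4 : ℝ) * (ηd ⬝ᵥ ((θ t₀)⁻¹).mulVec (η t₀)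
              + η t₀ ⬝ᵥ (-((θ t₀)⁻¹ * θd * (θ t₀)⁻¹)).mulVec (η t₀)
              + η t₀ ⬝ᵥ ((θ t₀)⁻¹).mulVec ηd)
            - (1 / 2 : ℝ) * ((θ t₀)⁻¹ * θd).trace))) t₀ := by
  have hA : HasDerivAt (fun t => η t ⬝ᵥ x) (ηd ⬝ᵥ x) t₀ := by
    have h1 : ∀ t, η t ⬝ᵥ x = ∑ m, η t m * x m := fun _ => rfl
    simp_rw [h1]
    have h2 : (ηd ⬝ᵥ x) = ∑ m, ηd m * x m := rfl
    rw [h2]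
    exact HasDerivAt.fun_sum fun m _ => (hη m).mul_const (x m)
  have hQ : HasDerivAt (fun t => x ⬝ᵥ (θ t).mulVec x) (x ⬝ᵥ θd.mulVec x) t₀ := by
    have key : ∀ (A : Matrix (Fin n) (Fin n) ℝ), x ⬝ᵥ A.mulVec x
        = ∑ m, ∑ r, x m * (A m r * x r) := by
      intro A
      simp only [dotProduct, Matrix.mulVec, Finset.mul_sum]
    simp_rw [key]
    exact HasDerivAt.fun_sum fun m _ => HasDerivAt.fun_sum fun r _ =>
      ((hθ m r).mul_const (x r)).const_mul (x m)
  have hInv := hasDerivAt_inv_path hθ hdet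
  have hquadInv : HasDerivAt (fun t => η t ⬝ᵥ ((θ t)⁻¹).mulVec (η t))
      (ηd ⬝ᵥ ((θ t₀)⁻¹).mulVec (η t₀)
        + η t₀ ⬝ᵥ (-((θ t₀)⁻¹ * θd * (θ t₀)⁻¹)).mulVec (η t₀)
        + η t₀ ⬝ᵥ ((θ t₀)⁻¹).mulVec ηd) t₀ := by
    have key : ∀ (v : Fin n → ℝ) (A : Matrix (Fin n) (Fin n) ℝ) (w : Fin n → ℝ),
        v ⬝ᵥ A.mulVec w = ∑ m, ∑ r, v m * (A m r * w r) := by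
      intro v A w
      simp only [dotProduct, Matrix.mulVec, Finset.mul_sum]
    simp_rw [key]
    have h : HasDerivAt (fun t => ∑ m, ∑ r, η t m * ((θ t)⁻¹ m r * η t r))
        (∑ m, ∑ r, (ηd m * ((θ t₀)⁻¹ m r * η t₀ r)
          + η t₀ m * ((-((θ t₀)⁻¹ * θd * (θ t₀)⁻¹)) m r * η t₀ r
            + (θ t₀)⁻¹ m r * ηd r))) t₀ :=
      HasDerivAt.fun_sum fun m _ => HasDerivAt.fun_sum fun r _ =>
        (hη m).mul ((hInv m r).mul (hη r))
    convert h using 1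
    simp only [mul_add, Finset.sum_add_distrib]
    ring
  have hlog : HasDerivAt (fun t => Real.log (((-(1 / 2) : ℝ) • (θ t)⁻¹).det))
      (-(((θ t₀)⁻¹ * θd).trace)) t₀ := by
    have heq : (fun t => Real.log (((-(1 / 2) : ℝ) • (θ t)⁻¹).det))
        = fun t => Real.log ((-(1 / 2) : ℝ) ^ n) - Real.log ((θ t).det) := by
      funext t
      rw [Matrix.det_smul, Matrix.det_nonsing_inv, Ring.inverse_eq_inv']
      rw [Real.log_mul (by positivity) (inv_ne_zero (hdet t).ne_zero), Real.log_inv]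
      simp [Fintype.card_fin]
      ring
    rw [heq]
    have hd := hasDerivAt_det_path hθ
    have h5 := (hd.log (hdet t₀).ne_zero).const_sub (Real.log ((-(1 / 2) : ℝ) ^ n))
    refine h5.congr_deriv ?_
    rw [div_eq_mul_inv, ← div_eq_mul_inv, trace_adj_div_det _ _ (hdet t₀)]
  have harg := (hA.add hQ).sub
    (((hquadInv.const_mul (-(1 / 4 : ℝ))).add (hlog.const_mul (1 / 2 : ℝ))).add_const C)
  have harg2 : HasDerivAt (fun t => η t ⬝ᵥ x + x ⬝ᵥ (θ t).mulVec x
      - (-(1 / 4 : ℝ) * (η t ⬝ᵥ ((θ t)⁻¹).mulVec (η t))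
        + (1 / 2 : ℝ) * Real.log (((-(1 / 2) : ℝ) • (θ t)⁻¹).det) + C))
      (ηd ⬝ᵥ x + x ⬝ᵥ θd.mulVec x
        - (-(1 / 4 : ℝ) * (ηd ⬝ᵥ ((θ t₀)⁻¹).mulVec (η t₀)
            + η t₀ ⬝ᵥ (-((θ t₀)⁻¹ * θd * (θ t₀)⁻¹)).mulVec (η t₀)
            + η t₀ ⬝ᵥ ((θ t₀)⁻¹).mulVec ηd)
          - (1 / 2 : ℝ) * ((θ t₀)⁻¹ * θd).trace)) t₀ := by
    refine harg.congr_deriv ?_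
    ring
  exact harg2.exp

lemma dot_mulVec_swap (A : Matrix (Fin n) (Fin n) ℝ) (v w : Fin n → ℝ) :
    A.mulVec v ⬝ᵥ w = v ⬝ᵥ Aᵀ.mulVec w := by
  rw [dotProduct_comm, Matrix.dotProduct_mulVec, dotProduct_comm]
  congr 1
  rw [← Matrix.vecMul_transpose, Matrix.transpose_transpose]

lemma final_scalar (T θd B : Matrix (Fin n) (Fin n) ℝ) (e ed x : Fin n → ℝ)
    (hTs : Tᵀ = T) (hds : θdᵀ = θd) (hBs : Bᵀ = B) (hTB : T * B = 1) :
    ed ⬝ᵥ x + x ⬝ᵥ θd.mulVec x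
      - (-(1 / 4 : ℝ) * (ed ⬝ᵥ B.mulVec e + e ⬝ᵥ (-(B * θd * B)).mulVec e + e ⬝ᵥ B.mulVec ed)
        - (1 / 2 : ℝ) * (B * θd).trace)
    = -(∑ i, (e i + 2 * T.mulVec x i) *
          (((1 / 4 : ℝ) • (B * θd * B).mulVec e - (1 / 2 : ℝ) • B.mulVec ed
            - (1 / 2 : ℝ) • (B * θd).mulVec x) i)
        + ∑ i, (-((1 / 2 : ℝ) • (B * θd))) i i) := by
  have key : ∀ (A : Matrix (Fin n) (Fin n) ℝ) (v w : Fin n → ℝ),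
      T.mulVec v ⬝ᵥ A.mulVec w = v ⬝ᵥ ((T * A).mulVec w) := by
    intro A v w
    rw [dot_mulVec_swap, hTs, Matrix.mulVec_mulVec]
  have hsum : ∑ i, (e i + 2 * T.mulVec x i) *
      (((1 / 4 : ℝ) • (B * θd * B).mulVec e - (1 / 2 : ℝ) • B.mulVec ed
        - (1 / 2 : ℝ) • (B * θd).mulVec x) i)
      = (1 / 4 : ℝ) * (e ⬝ᵥ (B * θd * B).mulVec e)
        - (1 / 2 : ℝ) * (e ⬝ᵥ B.mulVec ed)
        - (1 / 2 : ℝ) * (e ⬝ᵥ (B * θd).mulVec x)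
        + (1 / 2 : ℝ) * (T.mulVec x ⬝ᵥ (B * θd * B).mulVec e)
        - (T.mulVec x ⬝ᵥ B.mulVec ed)
        - (T.mulVec x ⬝ᵥ (B * θd).mulVec x) := by
    simp only [dotProduct, Pi.sub_apply, Pi.smul_apply, smul_eq_mul, Finset.mul_sum,
      ← Finset.sum_sub_distrib, ← Finset.sum_add_distrib]
    refine Finset.sum_congr rfl fun i _ => ?_
    ring
  have h1 : T.mulVec x ⬝ᵥ (B * θd * B).mulVec e = x ⬝ᵥ (θd * B).mulVec e := by
    rw [key]
    congr 2
    rw [show T * (B * θd * B) = (T * B) * (θd * B) by noncomm_ring, hTB, one_mul]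
  have h2 : T.mulVec x ⬝ᵥ B.mulVec ed = ed ⬝ᵥ x := by
    rw [key, hTB, Matrix.one_mulVec, dotProduct_comm]
  have h3 : T.mulVec x ⬝ᵥ (B * θd).mulVec x = x ⬝ᵥ θd.mulVec x := by
    rw [key]
    congr 2
    rw [← mul_assoc, hTB, one_mul]
  have h4 : x ⬝ᵥ (θd * B).mulVec e = e ⬝ᵥ (B * θd).mulVec x := by
    rw [dotProduct_comm, dot_mulVec_swap, Matrix.transpose_mul, hds, hBs]
  have h5 : ed ⬝ᵥ B.mulVec e = e ⬝ᵥ B.mulVec ed := by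
    rw [dotProduct_comm, dot_mulVec_swap, hBs]
  have h6 : e ⬝ᵥ (-(B * θd * B)).mulVec e = -(e ⬝ᵥ (B * θd * B).mulVec e) := by
    rw [Matrix.neg_mulVec, dotProduct_neg]
  have h7 : ∑ i, (-((1 / 2 : ℝ) • (B * θd))) i i = -((1 / 2 : ℝ) * (B * θd).trace) := by
    rw [Matrix.trace, Finset.mul_sum, ← Finset.sum_neg_distrib]
    refine Finset.sum_congr rfl fun i _ => ?_
    simp [Matrix.diag_apply]
  rw [hsum, h1, h2, h3, h4, h5, h6, h7]
  ring

lemma diff_coord (m : Fin n) : Differentiable ℝ (fun y : Fin n → ℝ => y m) :=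
  (ContinuousLinearMap.proj (R := ℝ) (φ := fun _ : Fin n => ℝ) m).differentiable

lemma diff_dot (e : Fin n → ℝ) : Differentiable ℝ (fun y : Fin n → ℝ => e ⬝ᵥ y) := by
  have h : (fun y : Fin n → ℝ => e ⬝ᵥ y) = fun y => ∑ m, e m * y m := funext fun _ => rfl
  rw [h]
  exact Differentiable.fun_sum fun m _ => (diff_coord m).const_mul (e m)

lemma diff_mulVec (T : Matrix (Fin n) (Fin n) ℝ) (j : Fin n) :
    Differentiable ℝ (fun y : Fin n → ℝ => T.mulVec y j) := by
  have h : (fun y : Fin n → ℝ => T.mulVec y j) = fun y => T j ⬝ᵥ y := funext fun _ => rfl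
  rw [h]; exact diff_dot _

lemma diff_quad (T : Matrix (Fin n) (Fin n) ℝ) :
    Differentiable ℝ (fun y : Fin n → ℝ => y ⬝ᵥ T.mulVec y) := by
  have h : (fun y : Fin n → ℝ => y ⬝ᵥ T.mulVec y) = fun y => ∑ m, y m * T.mulVec y m :=
    funext fun _ => rfl
  rw [h]
  exact Differentiable.fun_sum fun m _ => (diff_coord m).mul (diff_mulVec T m)

lemma diff_gauss (e : Fin n → ℝ) (T : Matrix (Fin n) (Fin n) ℝ) (c : ℝ) :
    Differentiable ℝ (fun y : Fin n → ℝ => Real.exp (e ⬝ᵥ y + y ⬝ᵥ T.mulVec y - c)) :=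
  (((diff_dot e).add (diff_quad T)).sub_const c).exp

lemma diffAt_fderiv_apply {f : (Fin n → ℝ) → ℝ} (hf : ContDiff ℝ 2 f) (v x : Fin n → ℝ) :
    DifferentiableAt ℝ (fun y => fderiv ℝ f y v) x := by
  have h1 : ContDiff ℝ 1 (fderiv ℝ f) := hf.fderiv_right (by norm_num)
  have h2 : Differentiable ℝ (fderiv ℝ f) := h1.differentiable (by norm_num)
  exact ((ContinuousLinearMap.apply ℝ ℝ v).differentiable).comp h2 |>.differentiableAt

end FPHelpers


/-- Proposition 5 combined with Theorem 4: the Gaussian-mixture density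
`p(y,t) = ∑_ℓ ν_ℓ exp((η^ℓ_t)ᵀy + yᵀθ^ℓ_t y − ψ(η^ℓ_t,θ^ℓ_t))` satisfies the Kolmogorov
forward (Fokker–Planck) equation at `(x,t₀)` with the closed-form drift
`u(y) = (1/2)div a(y) + (1/p)∑_ℓ ν_ℓ p_ℓ [(1/4)θ⁻¹θ̇θ⁻¹η − (1/2)θ⁻¹η̇ − (1/2)θ⁻¹θ̇y
  + a(y)((1/2)η + θy)]`. -/
theorem gaussian_mixture_fokker_planck {n k : ℕ} (hn : 1 ≤ n) (hk : 1 ≤ k) (t₀ : ℝ)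
    (ν : Fin k → ℝ) (hν0 : ∀ ℓ, 0 ≤ ν ℓ) (hν1 : ∑ ℓ, ν ℓ = 1)
    (a : (Fin n → ℝ) → Matrix (Fin n) (Fin n) ℝ)
    (ha : ∀ i j, ContDiff ℝ 2 (fun y => a y i j))
    (η : Fin k → ℝ → (Fin n → ℝ)) (θ : Fin k → ℝ → Matrix (Fin n) (Fin n) ℝ)
    (hθsymm : ∀ ℓ t, (θ ℓ t).IsSymm) (hθneg : ∀ ℓ t, (-(θ ℓ t)).PosDef)
    (ηdot : Fin k → (Fin n → ℝ)) (θdot : Fin k → Matrix (Fin n) (Fin n) ℝ)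
    (hη : ∀ ℓ, HasDerivAt (η ℓ) (ηdot ℓ) t₀)
    (hθd : ∀ ℓ i j, HasDerivAt (fun t => θ ℓ t i j) (θdot ℓ i j) t₀)
    (ψ : (Fin n → ℝ) → Matrix (Fin n) (Fin n) ℝ → ℝ)
    (hψ : ∀ (e : Fin n → ℝ) (T : Matrix (Fin n) (Fin n) ℝ), ψ e T =
      -(1 / 4 : ℝ) * (e ⬝ᵥ T⁻¹.mulVec e)
        + (1 / 2 : ℝ) * Real.log (((-(1 / 2) : ℝ) • T⁻¹).det)
        + ((n : ℝ) / 2) * Real.log (2 * Real.pi))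
    (pc : Fin k → (Fin n → ℝ) → ℝ → ℝ)
    (hpc : ∀ ℓ y t, pc ℓ y t =
      Real.exp (η ℓ t ⬝ᵥ y + y ⬝ᵥ (θ ℓ t).mulVec y - ψ (η ℓ t) (θ ℓ t)))
    (P : (Fin n → ℝ) → ℝ → ℝ)
    (hP : ∀ y t, P y t = ∑ ℓ, ν ℓ * pc ℓ y t)
    (u : (Fin n → ℝ) → (Fin n → ℝ))
    (hu : ∀ y, u y =
      (1 / 2 : ℝ) • (fun i => ∑ j, pderivCoord j (fun z => a z i j) y)
        + (1 / P y t₀) •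
            ∑ ℓ, (ν ℓ * pc ℓ y t₀) •
              ((1 / 4 : ℝ) • ((θ ℓ t₀)⁻¹ * θdot ℓ * (θ ℓ t₀)⁻¹).mulVec (η ℓ t₀)
                - (1 / 2 : ℝ) • (θ ℓ t₀)⁻¹.mulVec (ηdot ℓ)
                - (1 / 2 : ℝ) • ((θ ℓ t₀)⁻¹ * θdot ℓ).mulVec y
                + (a y).mulVec ((1 / 2 : ℝ) • η ℓ t₀ + (θ ℓ t₀).mulVec y)))
    (x : Fin n → ℝ) :
    HasDerivAt (fun t => P x t)
      (-∑ i, pderivCoord i (fun y => u y i * P y t₀) x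
        + (1 / 2 : ℝ) * ∑ i, ∑ j,
            pderivCoord i (fun y => pderivCoord j (fun z => a z i j * P z t₀) y) x)
      t₀ := by
  classical
  -- ======== basic facts ========
  have hdetne : ∀ ℓ t, (θ ℓ t).det ≠ 0 := by
    intro ℓ t
    have h1 : 0 < (-(θ ℓ t)).det := (hθneg ℓ t).det_pos
    intro h0
    rw [Matrix.det_neg, h0, mul_zero] at h1
    exact lt_irrefl _ h1
  have hdetUnit : ∀ ℓ t, IsUnit (θ ℓ t).det := fun ℓ t => isUnit_iff_ne_zero.mpr (hdetne ℓ t)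
  have hTs : ∀ ℓ, (θ ℓ t₀)ᵀ = θ ℓ t₀ := fun ℓ => hθsymm ℓ t₀
  have hds : ∀ ℓ, (θdot ℓ)ᵀ = θdot ℓ := by
    intro ℓ
    ext i j
    rw [Matrix.transpose_apply]
    have h1 : (fun t => θ ℓ t j i) = fun t => θ ℓ t i j := by
      funext t; exact (hθsymm ℓ t).apply i j
    have h2 := hθd ℓ j i
    rw [h1] at h2
    exact h2.unique (hθd ℓ i j)
  have hBs : ∀ ℓ, ((θ ℓ t₀)⁻¹)ᵀ = (θ ℓ t₀)⁻¹ := by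
    intro ℓ; rw [Matrix.transpose_nonsing_inv, hTs]
  have hTB : ∀ ℓ, θ ℓ t₀ * (θ ℓ t₀)⁻¹ = 1 := fun ℓ => Matrix.mul_nonsing_inv _ (hdetUnit ℓ t₀)
  have hpcpos : ∀ ℓ y, 0 < pc ℓ y t₀ := fun ℓ y => by rw [hpc]; exact Real.exp_pos _
  have hPpos : ∀ y, 0 < P y t₀ := by
    intro y
    rw [hP]
    have hex : ∃ ℓ₀ : Fin k, 0 < ν ℓ₀ := by
      by_contra hc
      push_neg at hc
      have hle : (∑ ℓ, ν ℓ) ≤ 0 := Finset.sum_nonpos fun ℓ _ => hc ℓ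
      rw [hν1] at hle; linarith
    obtain ⟨ℓ₀, hℓ₀⟩ := hex
    exact Finset.sum_pos' (fun ℓ _ => mul_nonneg (hν0 ℓ) (hpcpos ℓ y).le)
      ⟨ℓ₀, Finset.mem_univ _, mul_pos hℓ₀ (hpcpos ℓ₀ y)⟩
  -- ======== spatial slices ========
  have hpcSlice : ∀ (ℓ : Fin k) (y : Fin n → ℝ) (i : Fin n),
      HasDerivAt (fun ξ => pc ℓ (Function.update y i ξ) t₀)
        (pc ℓ y t₀ * (η ℓ t₀ i + 2 * (θ ℓ t₀).mulVec y i)) (y i) := by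
    intro ℓ y i
    have h := hasDerivAt_slice_gauss (η ℓ t₀) (θ ℓ t₀) (ψ (η ℓ t₀) (θ ℓ t₀)) (hTs ℓ) y i
    simp_rw [← hpc] at h
    exact h
  have hPSlice : ∀ (y : Fin n → ℝ) (i : Fin n),
      HasDerivAt (fun ξ => P (Function.update y i ξ) t₀)
        (∑ ℓ, ν ℓ * (pc ℓ y t₀ * (η ℓ t₀ i + 2 * (θ ℓ t₀).mulVec y i))) (y i) := by
    intro y i
    have hre : (fun ξ => P (Function.update y i ξ) t₀)
        = fun ξ => ∑ ℓ, ν ℓ * pc ℓ (Function.update y i ξ) t₀ := funext fun ξ => hP _ _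
    rw [hre]
    exact HasDerivAt.fun_sum fun ℓ _ => (hpcSlice ℓ y i).const_mul (ν ℓ)
  -- ======== space differentiability ========
  have hpcDiff : ∀ ℓ, Differentiable ℝ fun y => pc ℓ y t₀ := by
    intro ℓ
    have hre : (fun y => pc ℓ y t₀) = fun y => Real.exp (η ℓ t₀ ⬝ᵥ y
        + y ⬝ᵥ (θ ℓ t₀).mulVec y - ψ (η ℓ t₀) (θ ℓ t₀)) := funext fun y => hpc ℓ y t₀
    rw [hre]
    exact diff_gauss _ _ _
  have hPDiff : Differentiable ℝ fun y => P y t₀ := by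
    have hre : (fun y => P y t₀) = fun y => ∑ ℓ, ν ℓ * pc ℓ y t₀ := funext fun y => hP y t₀
    rw [hre]
    exact Differentiable.fun_sum fun ℓ _ => (hpcDiff ℓ).const_mul _
  have hSDiff : ∀ j : Fin n, Differentiable ℝ fun y =>
      ∑ ℓ, ν ℓ * (pc ℓ y t₀ * (η ℓ t₀ j + 2 * (θ ℓ t₀).mulVec y j)) := fun j =>
    Differentiable.fun_sum fun ℓ _ =>
      ((hpcDiff ℓ).mul (((diff_mulVec (θ ℓ t₀) j).const_mul 2).const_add _)).const_mul _
  have haDiff : ∀ i j, Differentiable ℝ fun y => a y i j := fun i j =>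
    (ha i j).differentiable (by norm_num)
  -- ======== inner pderiv identity ========
  have hInner : ∀ (i j : Fin n) (y : Fin n → ℝ),
      pderivCoord j (fun z => a z i j * P z t₀) y
        = fderiv ℝ (fun z => a z i j) y (Pi.single j 1) * P y t₀
          + a y i j * ∑ ℓ, ν ℓ * (pc ℓ y t₀ * (η ℓ t₀ j + 2 * (θ ℓ t₀).mulVec y j)) := by
    intro i j y
    have hf : HasFDerivAt (fun z => a z i j) (fderiv ℝ (fun z => a z i j) y) y :=
      (haDiff i j y).hasFDerivAt
    have h := (hf.slice' j).mul (hPSlice y j)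
    rw [Function.update_eq_self] at h
    exact h.deriv
  have hDa : ∀ (i j m : Fin n) (y : Fin n → ℝ), pderivCoord m (fun z => a z i j) y
      = fderiv ℝ (fun z => a z i j) y (Pi.single m 1) := fun i j m y =>
    ((haDiff i j y).hasFDerivAt.slice' m).deriv
  -- ======== the correction vector field g ========
  set g : Fin n → (Fin n → ℝ) → ℝ := fun i y => ∑ ℓ, (ν ℓ * pc ℓ y t₀) *
      (((1 / 4 : ℝ) • ((θ ℓ t₀)⁻¹ * θdot ℓ * (θ ℓ t₀)⁻¹).mulVec (η ℓ t₀)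
        - (1 / 2 : ℝ) • ((θ ℓ t₀)⁻¹).mulVec (ηdot ℓ)
        - (1 / 2 : ℝ) • ((θ ℓ t₀)⁻¹ * θdot ℓ).mulVec y) i) with hgdef
  -- ======== key identity: u_i * P = (1/2) Σ_j ∂_j(a_ij P) + g_i ========
  have hKey : ∀ (i : Fin n) (y : Fin n → ℝ), u y i * P y t₀
      = (1 / 2 : ℝ) * (∑ j, pderivCoord j (fun z => a z i j * P z t₀) y) + g i y := by
    intro i y
    have hu' := congrFun (hu y) i
    simp only [Pi.add_apply, Pi.smul_apply, Pi.sub_apply, Finset.sum_apply,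
      smul_eq_mul] at hu'
    rw [hgdef]
    simp only [Pi.sub_apply, Pi.smul_apply, smul_eq_mul]
    rw [hu']
    have hPne : P y t₀ ≠ 0 := (hPpos y).ne'
    rw [add_mul]
    have hterm2 : 1 / P y t₀ *
        (∑ ℓ, ν ℓ * pc ℓ y t₀ *
          (1 / 4 * ((((θ ℓ t₀)⁻¹ * θdot ℓ * (θ ℓ t₀)⁻¹) *ᵥ η ℓ t₀) i)
            - 1 / 2 * (((θ ℓ t₀)⁻¹ *ᵥ ηdot ℓ) i)
            - 1 / 2 * ((((θ ℓ t₀)⁻¹ * θdot ℓ) *ᵥ y) i)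
            + (a y *ᵥ ((1 / 2 : ℝ) • η ℓ t₀ + θ ℓ t₀ *ᵥ y)) i)) * P y t₀
        = ∑ ℓ, ν ℓ * pc ℓ y t₀ *
          (1 / 4 * ((((θ ℓ t₀)⁻¹ * θdot ℓ * (θ ℓ t₀)⁻¹) *ᵥ η ℓ t₀) i)
            - 1 / 2 * (((θ ℓ t₀)⁻¹ *ᵥ ηdot ℓ) i)
            - 1 / 2 * ((((θ ℓ t₀)⁻¹ * θdot ℓ) *ᵥ y) i)
            + (a y *ᵥ ((1 / 2 : ℝ) • η ℓ t₀ + θ ℓ t₀ *ᵥ y)) i) := by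
      rw [one_div_mul_eq_div (P y t₀), div_mul_cancel₀ _ hPne]
    rw [hterm2]
    simp only [hInner, hDa]
    have hacancel : ∑ ℓ, ν ℓ * pc ℓ y t₀ * ((a y *ᵥ ((1 / 2 : ℝ) • η ℓ t₀ + θ ℓ t₀ *ᵥ y)) i)
        = 1 / 2 * ∑ j, a y i j *
            ∑ ℓ, ν ℓ * (pc ℓ y t₀ * (η ℓ t₀ j + 2 * (θ ℓ t₀ *ᵥ y) j)) := by
      have hmv : ∀ (v : Fin n → ℝ), (a y *ᵥ v) i = ∑ j, a y i j * v j := fun v => rfl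
      simp_rw [hmv, Pi.add_apply, Pi.smul_apply, smul_eq_mul, Finset.mul_sum]
      rw [Finset.sum_comm]
      refine Finset.sum_congr rfl fun j _ => Finset.sum_congr rfl fun ℓ _ => by ring
    have hsplit : ∑ ℓ, ν ℓ * pc ℓ y t₀ *
          (1 / 4 * ((((θ ℓ t₀)⁻¹ * θdot ℓ * (θ ℓ t₀)⁻¹) *ᵥ η ℓ t₀) i)
            - 1 / 2 * (((θ ℓ t₀)⁻¹ *ᵥ ηdot ℓ) i)
            - 1 / 2 * ((((θ ℓ t₀)⁻¹ * θdot ℓ) *ᵥ y) i)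
            + (a y *ᵥ ((1 / 2 : ℝ) • η ℓ t₀ + θ ℓ t₀ *ᵥ y)) i)
        = (∑ ℓ, ν ℓ * pc ℓ y t₀ *
          (1 / 4 * ((((θ ℓ t₀)⁻¹ * θdot ℓ * (θ ℓ t₀)⁻¹) *ᵥ η ℓ t₀) i)
            - 1 / 2 * (((θ ℓ t₀)⁻¹ *ᵥ ηdot ℓ) i)
            - 1 / 2 * ((((θ ℓ t₀)⁻¹ * θdot ℓ) *ᵥ y) i)))
          + ∑ ℓ, ν ℓ * pc ℓ y t₀ * ((a y *ᵥ ((1 / 2 : ℝ) • η ℓ t₀ + θ ℓ t₀ *ᵥ y)) i) := by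
      rw [← Finset.sum_add_distrib]
      refine Finset.sum_congr rfl fun ℓ _ => ?_
      ring
    rw [hsplit, hacancel]
    have hsummul : (1 / 2 * ∑ j, fderiv ℝ (fun z => a z i j) y (Pi.single j 1)) * P y t₀
        = 1 / 2 * ∑ j, fderiv ℝ (fun z => a z i j) y (Pi.single j 1) * P y t₀ := by
      rw [mul_assoc, Finset.sum_mul]
    rw [hsummul]
    have hsplit2 : ∑ j, (fderiv ℝ (fun z => a z i j) y (Pi.single j 1) * P y t₀
        + a y i j * ∑ ℓ, ν ℓ * (pc ℓ y t₀ * (η ℓ t₀ j + 2 * (θ ℓ t₀ *ᵥ y) j)))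
        = (∑ j, fderiv ℝ (fun z => a z i j) y (Pi.single j 1) * P y t₀)
          + ∑ j, a y i j * ∑ ℓ, ν ℓ * (pc ℓ y t₀ * (η ℓ t₀ j + 2 * (θ ℓ t₀ *ᵥ y) j)) :=
      Finset.sum_add_distrib
    rw [hsplit2, mul_add]
    ring
  -- ======== derivative of the slice of g ========
  have hcvSlice : ∀ (ℓ : Fin k) (i : Fin n),
      HasDerivAt (fun ξ => (((1 / 4 : ℝ) • ((θ ℓ t₀)⁻¹ * θdot ℓ * (θ ℓ t₀)⁻¹).mulVec (η ℓ t₀)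
          - (1 / 2 : ℝ) • ((θ ℓ t₀)⁻¹).mulVec (ηdot ℓ)
          - (1 / 2 : ℝ) • ((θ ℓ t₀)⁻¹ * θdot ℓ).mulVec (Function.update x i ξ)) i))
        ((-((1 / 2 : ℝ) • ((θ ℓ t₀)⁻¹ * θdot ℓ))) i i) (x i) := by
    intro ℓ i
    have h0 : (fun ξ => (((1 / 4 : ℝ) • ((θ ℓ t₀)⁻¹ * θdot ℓ * (θ ℓ t₀)⁻¹).mulVec (η ℓ t₀)
          - (1 / 2 : ℝ) • ((θ ℓ t₀)⁻¹).mulVec (ηdot ℓ)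
          - (1 / 2 : ℝ) • ((θ ℓ t₀)⁻¹ * θdot ℓ).mulVec (Function.update x i ξ)) i))
        = fun ξ => (((1 / 4 : ℝ) • ((θ ℓ t₀)⁻¹ * θdot ℓ * (θ ℓ t₀)⁻¹).mulVec (η ℓ t₀)) i
            - ((1 / 2 : ℝ) • ((θ ℓ t₀)⁻¹).mulVec (ηdot ℓ)) i)
            - (1 / 2 : ℝ) * (((θ ℓ t₀)⁻¹ * θdot ℓ) i ⬝ᵥ Function.update x i ξ) := by
      funext ξ
      simp only [Pi.sub_apply, Pi.smul_apply, smul_eq_mul]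
      rfl
    rw [h0]
    have h1 := ((hasDerivAt_slice_dot (((θ ℓ t₀)⁻¹ * θdot ℓ) i) x i).const_mul
      ((1 / 2 : ℝ))).const_sub ((((1 / 4 : ℝ) • ((θ ℓ t₀)⁻¹ * θdot ℓ * (θ ℓ t₀)⁻¹).mulVec (η ℓ t₀)) i
            - ((1 / 2 : ℝ) • ((θ ℓ t₀)⁻¹).mulVec (ηdot ℓ)) i))
    exact h1.congr_deriv rfl
  have hgSlice : ∀ i : Fin n, HasDerivAt (fun ξ => g i (Function.update x i ξ))
      (∑ ℓ, ((ν ℓ * (pc ℓ x t₀ * (η ℓ t₀ i + 2 * (θ ℓ t₀).mulVec x i)))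
          * (((1 / 4 : ℝ) • ((θ ℓ t₀)⁻¹ * θdot ℓ * (θ ℓ t₀)⁻¹).mulVec (η ℓ t₀)
            - (1 / 2 : ℝ) • ((θ ℓ t₀)⁻¹).mulVec (ηdot ℓ)
            - (1 / 2 : ℝ) • ((θ ℓ t₀)⁻¹ * θdot ℓ).mulVec x) i)
        + (ν ℓ * pc ℓ x t₀) * ((-((1 / 2 : ℝ) • ((θ ℓ t₀)⁻¹ * θdot ℓ))) i i))) (x i) := by
    intro i
    rw [hgdef]
    have h := HasDerivAt.fun_sum (u := Finset.univ) fun ℓ (_ : ℓ ∈ Finset.univ) =>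
      ((hpcSlice ℓ x i).const_mul (ν ℓ)).fun_mul (hcvSlice ℓ i)
    rw [Function.update_eq_self] at h
    exact h
  have hgval : ∀ i : Fin n, pderivCoord i (g i) x
      = ∑ ℓ, ((ν ℓ * (pc ℓ x t₀ * (η ℓ t₀ i + 2 * (θ ℓ t₀).mulVec x i)))
          * (((1 / 4 : ℝ) • ((θ ℓ t₀)⁻¹ * θdot ℓ * (θ ℓ t₀)⁻¹).mulVec (η ℓ t₀)
            - (1 / 2 : ℝ) • ((θ ℓ t₀)⁻¹).mulVec (ηdot ℓ)
            - (1 / 2 : ℝ) • ((θ ℓ t₀)⁻¹ * θdot ℓ).mulVec x) i)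
        + (ν ℓ * pc ℓ x t₀) * ((-((1 / 2 : ℝ) • ((θ ℓ t₀)⁻¹ * θdot ℓ))) i i)) := fun i =>
    (hgSlice i).deriv
  -- ======== differentiability at x of inner pderivs and of g ========
  have hinnerDiffAt : ∀ i j : Fin n,
      DifferentiableAt ℝ (fun y => pderivCoord j (fun z => a z i j * P z t₀) y) x := by
    intro i j
    have hfe : (fun y => pderivCoord j (fun z => a z i j * P z t₀) y)
        = fun y => fderiv ℝ (fun z => a z i j) y (Pi.single j 1) * P y t₀
            + a y i j * ∑ ℓ, ν ℓ * (pc ℓ y t₀ * (η ℓ t₀ j + 2 * (θ ℓ t₀).mulVec y j)) :=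
      funext fun y => hInner i j y
    rw [hfe]
    exact ((diffAt_fderiv_apply (ha i j) _ x).mul (hPDiff x)).add
      ((haDiff i j x).mul ((hSDiff j) x))
  -- ======== outer derivative linearity ========
  have hOuter : ∀ i : Fin n, pderivCoord i (fun y => u y i * P y t₀) x
      = (1 / 2 : ℝ) * (∑ j, pderivCoord i
          (fun y => pderivCoord j (fun z => a z i j * P z t₀) y) x)
        + pderivCoord i (g i) x := by
    intro i
    have hfe : (fun y => u y i * P y t₀) = fun y =>
        (1 / 2 : ℝ) * (∑ j, pderivCoord j (fun z => a z i j * P z t₀) y) + g i y :=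
      funext fun y => hKey i y
    show deriv (fun ξ => u (Function.update x i ξ) i * P (Function.update x i ξ) t₀) (x i) = _
    rw [show (fun ξ => u (Function.update x i ξ) i * P (Function.update x i ξ) t₀)
        = fun ξ => (1 / 2 : ℝ) * (∑ j, pderivCoord j (fun z => a z i j * P z t₀)
            (Function.update x i ξ)) + g i (Function.update x i ξ) from
      funext fun ξ => hKey i (Function.update x i ξ)]
    have hd4 : ∀ j ∈ Finset.univ, DifferentiableAt ℝ
        (fun ξ => pderivCoord j (fun z => a z i j * P z t₀) (Function.update x i ξ)) (x i) :=
      fun j _ => (hinnerDiffAt i j).slice' i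
    have hd3 : DifferentiableAt ℝ (fun ξ => ∑ j, pderivCoord j
        (fun z => a z i j * P z t₀) (Function.update x i ξ)) (x i) :=
      DifferentiableAt.fun_sum hd4
    have hd2 : DifferentiableAt ℝ (fun ξ => g i (Function.update x i ξ)) (x i) :=
      (hgSlice i).differentiableAt
    rw [deriv_fun_add (hd3.const_mul _) hd2, deriv_const_mul _ hd3, deriv_fun_sum hd4]
    rfl
  -- ======== time derivative ========
  have hTime : HasDerivAt (fun t => P x t)
      (∑ ℓ, ν ℓ * (pc ℓ x t₀ * (ηdot ℓ ⬝ᵥ x + x ⬝ᵥ (θdot ℓ).mulVec x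
        - (-(1 / 4 : ℝ) * (ηdot ℓ ⬝ᵥ ((θ ℓ t₀)⁻¹).mulVec (η ℓ t₀)
            + η ℓ t₀ ⬝ᵥ (-((θ ℓ t₀)⁻¹ * θdot ℓ * (θ ℓ t₀)⁻¹)).mulVec (η ℓ t₀)
            + η ℓ t₀ ⬝ᵥ ((θ ℓ t₀)⁻¹).mulVec (ηdot ℓ))
          - (1 / 2 : ℝ) * ((θ ℓ t₀)⁻¹ * θdot ℓ).trace)))) t₀ := by
    have hre : (fun t => P x t) = fun t => ∑ ℓ, ν ℓ * pc ℓ x t := funext fun t => hP x t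
    rw [hre]
    apply HasDerivAt.fun_sum
    intro ℓ _
    have hη' : ∀ m, HasDerivAt (fun t => η ℓ t m) (ηdot ℓ m) t₀ := by
      intro m
      have hm := ((ContinuousLinearMap.proj (R := ℝ) (φ := fun _ : Fin n => ℝ)
        m).hasFDerivAt).comp_hasDerivAt t₀ (hη ℓ)
      exact hm
    have hcomp := hasDerivAt_time_component (η ℓ) (θ ℓ) (ηdot ℓ) (θdot ℓ) t₀
      (((n : ℝ)) / 2 * Real.log (2 * Real.pi)) x hη' (hθd ℓ) (hdetUnit ℓ)
    have hfun : (fun t => pc ℓ x t) = fun t => Real.exp (η ℓ t ⬝ᵥ x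
        + x ⬝ᵥ (θ ℓ t).mulVec x
        - (-(1 / 4 : ℝ) * (η ℓ t ⬝ᵥ ((θ ℓ t)⁻¹).mulVec (η ℓ t))
          + (1 / 2 : ℝ) * Real.log (((-(1 / 2) : ℝ) • (θ ℓ t)⁻¹).det)
          + ((n : ℝ)) / 2 * Real.log (2 * Real.pi))) := by
      funext t; rw [hpc, hψ]
    have hval : pc ℓ x t₀ = Real.exp (η ℓ t₀ ⬝ᵥ x + x ⬝ᵥ (θ ℓ t₀).mulVec x
        - (-(1 / 4 : ℝ) * (η ℓ t₀ ⬝ᵥ ((θ ℓ t₀)⁻¹).mulVec (η ℓ t₀))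
          + (1 / 2 : ℝ) * Real.log (((-(1 / 2) : ℝ) • (θ ℓ t₀)⁻¹).det)
          + ((n : ℝ)) / 2 * Real.log (2 * Real.pi))) := by
      rw [hpc, hψ]
    have hder : HasDerivAt (fun t => pc ℓ x t)
        (pc ℓ x t₀ * (ηdot ℓ ⬝ᵥ x + x ⬝ᵥ (θdot ℓ).mulVec x
          - (-(1 / 4 : ℝ) * (ηdot ℓ ⬝ᵥ ((θ ℓ t₀)⁻¹).mulVec (η ℓ t₀)
              + η ℓ t₀ ⬝ᵥ (-((θ ℓ t₀)⁻¹ * θdot ℓ * (θ ℓ t₀)⁻¹)).mulVec (η ℓ t₀)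
              + η ℓ t₀ ⬝ᵥ ((θ ℓ t₀)⁻¹).mulVec (ηdot ℓ))
            - (1 / 2 : ℝ) * ((θ ℓ t₀)⁻¹ * θdot ℓ).trace))) t₀ := by
      rw [hfun, hval]
      exact hcomp
    exact hder.const_mul (ν ℓ)
  -- ======== final assembly ========
  have hsum1 : ∑ i, pderivCoord i (fun y => u y i * P y t₀) x
      = (1 / 2 : ℝ) * (∑ i, ∑ j, pderivCoord i
          (fun y => pderivCoord j (fun z => a z i j * P z t₀) y) x)
        + ∑ i, pderivCoord i (g i) x := by
    rw [Finset.mul_sum, ← Finset.sum_add_distrib]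
    exact Finset.sum_congr rfl fun i _ => hOuter i
  have hfact : ∀ ℓ : Fin k, ∑ i, ((ν ℓ * (pc ℓ x t₀ * (η ℓ t₀ i + 2 * (θ ℓ t₀).mulVec x i)))
          * (((1 / 4 : ℝ) • ((θ ℓ t₀)⁻¹ * θdot ℓ * (θ ℓ t₀)⁻¹).mulVec (η ℓ t₀)
            - (1 / 2 : ℝ) • ((θ ℓ t₀)⁻¹).mulVec (ηdot ℓ)
            - (1 / 2 : ℝ) • ((θ ℓ t₀)⁻¹ * θdot ℓ).mulVec x) i)
        + (ν ℓ * pc ℓ x t₀) * ((-((1 / 2 : ℝ) • ((θ ℓ t₀)⁻¹ * θdot ℓ))) i i))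
      = ν ℓ * (pc ℓ x t₀ * (∑ i, (η ℓ t₀ i + 2 * (θ ℓ t₀).mulVec x i)
          * (((1 / 4 : ℝ) • ((θ ℓ t₀)⁻¹ * θdot ℓ * (θ ℓ t₀)⁻¹).mulVec (η ℓ t₀)
            - (1 / 2 : ℝ) • ((θ ℓ t₀)⁻¹).mulVec (ηdot ℓ)
            - (1 / 2 : ℝ) • ((θ ℓ t₀)⁻¹ * θdot ℓ).mulVec x) i)
          + ∑ i, (-((1 / 2 : ℝ) • ((θ ℓ t₀)⁻¹ * θdot ℓ))) i i)) := by
    intro ℓ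
    simp only [Finset.sum_add_distrib, mul_add, Finset.mul_sum]
    congr 1
    · exact Finset.sum_congr rfl fun i _ => by ring
    · exact Finset.sum_congr rfl fun i _ => by ring
  have hRHS : (-∑ i, pderivCoord i (fun y => u y i * P y t₀) x
      + (1 / 2 : ℝ) * ∑ i, ∑ j, pderivCoord i
          (fun y => pderivCoord j (fun z => a z i j * P z t₀) y) x)
      = ∑ ℓ, ν ℓ * (pc ℓ x t₀ * (ηdot ℓ ⬝ᵥ x + x ⬝ᵥ (θdot ℓ).mulVec x
        - (-(1 / 4 : ℝ) * (ηdot ℓ ⬝ᵥ ((θ ℓ t₀)⁻¹).mulVec (η ℓ t₀)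
            + η ℓ t₀ ⬝ᵥ (-((θ ℓ t₀)⁻¹ * θdot ℓ * (θ ℓ t₀)⁻¹)).mulVec (η ℓ t₀)
            + η ℓ t₀ ⬝ᵥ ((θ ℓ t₀)⁻¹).mulVec (ηdot ℓ))
          - (1 / 2 : ℝ) * ((θ ℓ t₀)⁻¹ * θdot ℓ).trace))) := by
    rw [hsum1]
    have hstep : ∀ z w : ℝ, -((1 / 2 : ℝ) * z + w) + (1 / 2 : ℝ) * z = -w := fun z w => by ring
    rw [hstep]
    simp_rw [hgval]
    rw [Finset.sum_comm, ← Finset.sum_neg_distrib]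
    refine Finset.sum_congr rfl fun ℓ _ => ?_
    rw [hfact ℓ]
    rw [final_scalar (θ ℓ t₀) (θdot ℓ) ((θ ℓ t₀)⁻¹) (η ℓ t₀) (ηdot ℓ) x
      (hTs ℓ) (hds ℓ) (hBs ℓ) (hTB ℓ)]
    ring
  rw [← hRHS] at hTime
  exact hTime
end

section
/- (Appendix A: the smoothing density solves a Kolmogorov forward equation with the corrected drift, one-dimensional identity.) Let f : ℝ → ℝ be continuously differentiable, a : ℝ → ℝ twice continuously differentiable, r : ℝ × ℝ → ℝ arbitrary, and K ∈ ℝ. Let w, p : ℝ × ℝ → ℝ be such that at a point (x,t): w(·,t) and p(·,t) are twice continuously differentiable on a neighborhood of x, w > 0 on that neighborhood, the time derivatives ∂_t w(x,t) and ∂_t p(x,t) exist and satisfy the backward equation ∂_t w(x,t) = −f(x)∂_x w(x,t) − (1/2)a(x)∂_x² w(x,t) − w(x,t)r(x,t) and the forward equation ∂_t p(x,t) = −∂_x( f·p(·,t) )(x) + (1/2)∂_x²( a·p(·,t) )(x) + p(x,t)r(x,t). Define q(y,s) := K·p(y,s)·w(y,s) and the corrected drift g(y,s) := f(y) + a(y)·∂_y(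 log w(·,s) )(y). Then ∂_t q(x,t) exists and ∂_t q(x,t) = −∂_x( g(·,t)·q(·,t) )(x) + (1/2)∂_x²( a·q(·,t) )(x). -/
open Filter

/-- From twice continuous differentiability at a point: the function is differentiable
on a neighborhood, and its derivative is differentiable at the point. -/
lemma aux_ev_diff {F : ℝ → ℝ} {x : ℝ} (h : ContDiffAt ℝ 2 F x) :
    (∀ᶠ y in nhds x, DifferentiableAt ℝ F y) ∧ DifferentiableAt ℝ (deriv F) x := by
  obtain ⟨u, hu, hcd⟩ := h.contDiffOn (le_refl 2) (by simp)
  obtain ⟨s, hsu, hs, hxs⟩ := mem_nhds_iff.mp hu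
  constructor
  · filter_upwards [hs.mem_nhds hxs] with y hy
    exact ((hcd.mono hsu).differentiableOn (by norm_num)).differentiableAt (hs.mem_nhds hy)
  · have := ((hcd.mono hsu).deriv_of_isOpen hs (m := 1) (by norm_num)).differentiableOn
      (by norm_num)
    exact this.differentiableAt (hs.mem_nhds hxs)

/-- Appendix A (equation (9) of the paper), one-dimensional identity: if `p` satisfies the
forward equation `∂_t p = −∂_x(fp) + (1/2)∂_x²(ap) + pr` and `w` the backward equation
`∂_t w = −f ∂_x w − (1/2)a ∂_x²w − wr` at the point `(x,t)`, with `w, p` twice continuously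
differentiable in space near `x` and `w > 0` near `x`, then the smoothing density
`q = K p w` satisfies the Kolmogorov forward equation
`∂_t q = −∂_x(gq) + (1/2)∂_x²(aq)` with the corrected drift `g = f + a ∂_x log w`. -/
theorem smoothing_density_forward_equation
    (f : ℝ → ℝ) (hf : ContDiff ℝ 1 f)
    (a : ℝ → ℝ) (ha : ContDiff ℝ 2 a)
    (r : ℝ → ℝ → ℝ) (K : ℝ)
    (w p : ℝ → ℝ → ℝ) (x t : ℝ)
    (hw : ContDiffAt ℝ 2 (fun y => w y t) x)
    (hp : ContDiffAt ℝ 2 (fun y => p y t) x)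
    (hwpos : ∀ᶠ y in nhds x, 0 < w y t)
    (hwt : HasDerivAt (fun s => w x s)
      (-f x * deriv (fun y => w y t) x
        - (1 / 2 : ℝ) * a x * deriv (deriv (fun y => w y t)) x
        - w x t * r x t) t)
    (hpt : HasDerivAt (fun s => p x s)
      (-(deriv (fun y => f y * p y t) x)
        + (1 / 2 : ℝ) * deriv (deriv (fun y => a y * p y t)) x
        + p x t * r x t) t)
    (q : ℝ → ℝ → ℝ) (hq : ∀ y s, q y s = K * p y s * w y s)
    (g : ℝ → ℝ → ℝ)
    (hg : ∀ y s, g y s = f y + a y * deriv (fun z => Real.log (w z s)) y) :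
    HasDerivAt (fun s => q x s)
      (-(deriv (fun y => g y t * q y t) x)
        + (1 / 2 : ℝ) * deriv (deriv (fun y => a y * q y t)) x) t := by
  obtain ⟨hWev, hWd⟩ := aux_ev_diff hw
  obtain ⟨hPev, _⟩ := aux_ev_diff hp
  have hap : ContDiffAt ℝ 2 (fun y => a y * p y t) x := ha.contDiffAt.mul hp
  obtain ⟨_, hAPd⟩ := aux_ev_diff hap
  have hWx : DifferentiableAt ℝ (fun y => w y t) x := hWev.self_of_nhds
  have hPx : DifferentiableAt ℝ (fun y => p y t) x := hPev.self_of_nhds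
  have hfd : Differentiable ℝ f := hf.differentiable (by norm_num)
  have had : Differentiable ℝ a := ha.differentiable (by norm_num)
  -- named derivatives
  set B := deriv (fun y => w y t) x with hB
  set B2 := deriv (deriv (fun y => w y t)) x with hB2
  set C := deriv (fun y => f y * p y t) x with hC
  set E := deriv (fun y => a y * p y t) x with hE
  set E2 := deriv (deriv (fun y => a y * p y t)) x with hE2
  have h1 : HasDerivAt (fun y => f y * p y t) C x := ((hfd x).mul hPx).hasDerivAt
  have h2 : HasDerivAt (fun y => w y t) B x := hWx.hasDerivAt
  have h3 : HasDerivAt (fun y => a y * p y t) E x := ((had x).mul hPx).hasDerivAt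
  have h4 : HasDerivAt (deriv (fun y => w y t)) B2 x := hWd.hasDerivAt
  have h5 : HasDerivAt (deriv (fun y => a y * p y t)) E2 x := hAPd.hasDerivAt
  -- first spatial derivative of g·q
  have e1 : (fun y => g y t * q y t) =ᶠ[nhds x]
      fun y => K * ((f y * p y t) * w y t + (a y * p y t) * deriv (fun z => w z t) y) := by
    filter_upwards [hwpos, hWev] with y hy hdy
    rw [hg, hq]
    have hlog : deriv (fun z => Real.log (w z t)) y = deriv (fun z => w z t) y / w y t :=
      (hdy.hasDerivAt.log hy.ne').deriv
    rw [hlog]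
    field_simp
  have hd1 : deriv (fun y => g y t * q y t) x
      = K * ((C * w x t + (f x * p x t) * B) + (E * B + (a x * p x t) * B2)) := by
    rw [e1.deriv_eq]
    exact (HasDerivAt.const_mul K ((h1.mul h2).add (h3.mul h4))).deriv
  -- second spatial derivative of a·q
  have haq : (fun y => a y * q y t) = fun y => K * ((a y * p y t) * w y t) := by
    funext y; rw [hq]; ring
  have e2 : deriv (fun y => K * ((a y * p y t) * w y t)) =ᶠ[nhds x]
      fun y => K * (deriv (fun z => a z * p z t) y * w y t
        + (a y * p y t) * deriv (fun z => w z t) y) := by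
    filter_upwards [hWev, hPev] with y hWy hPy
    exact (HasDerivAt.const_mul K
      ((((had y).mul hPy).hasDerivAt).mul hWy.hasDerivAt)).deriv
  have hd2 : deriv (deriv (fun y => a y * q y t)) x
      = K * ((E2 * w x t + E * B) + (E * B + (a x * p x t) * B2)) := by
    rw [haq, e2.deriv_eq]
    exact (HasDerivAt.const_mul K ((h5.mul h2).add (h3.mul h4))).deriv
  -- time derivative of q
  have hqf : (fun s => q x s) = fun s => K * ((fun s => p x s) s * (fun s => w x s) s) := by
    funext s; rw [hq]; ring
  have hmain := HasDerivAt.const_mul K (hpt.mul hwt)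
  rw [hqf]
  exact hmain.congr_deriv (by rw [hd1, hd2]; ring)
end
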